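/- arXiv:1410.8264 — 10 statements merged into one kernel-verified Lean document; each statement's English description precedes it below -/
import Mathlib

section
/- For any real numbers x_0, ..., x_n and any real λ, writing x̄_k = max{x_0, ..., x_k}, we have λ·1{x̄_n ≥ λ} ≤ min(x_0, λ) + Σ_{k=1}^n 1{x̄_{k-1} < λ}·(x_k − x_{k-1}) − x_n·1{x̄_n < λ}. -/
open Finset

theorem stmt0 (n : ℕ) (x : ℕ → ℝ) (lam : ℝ) (xb : ℕ → ℝ)
    (hxb : ∀ k, xb k = (Finset.range (k + 1)).sup' Finset.nonempty_range_add_one x) :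
    lam * (if lam ≤ xb n then (1 : ℝ) else 0) ≤
      min (x 0) lam
        + ∑ k ∈ Finset.Icc 1 n, (if xb (k - 1) < lam then (1 : ℝ) else 0) * (x k - x (k - 1))
        - x n * (if xb n < lam then (1 : ℝ) else 0) := by
  have key : ∀ m, lam * (if lam ≤ xb m then (1 : ℝ) else 0)
      + x m * (if xb m < lam then (1 : ℝ) else 0) ≤
      min (x 0) lam
        + ∑ k ∈ Finset.Icc 1 m, (if xb (k - 1) < lam then (1 : ℝ) else 0) * (x k - x (k - 1)) := by
    intro m
    induction m with
    | zero =>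
      have h0 : xb 0 = x 0 := by
        rw [hxb 0]
        simp
      rw [h0]
      simp only [show Finset.Icc 1 0 = (∅ : Finset ℕ) by simp, Finset.sum_empty, add_zero]
      rcases le_or_gt lam (x 0) with h | h
      · rw [if_pos h, if_neg (not_lt.mpr h)]
        have : min (x 0) lam = lam := min_eq_right h
        simp [this]
      · rw [if_neg (not_le.mpr h), if_pos h]
        have : min (x 0) lam = x 0 := min_eq_left h.le
        simp [this]
    | succ n ih =>
      have hstep : xb (n + 1) = max (xb n) (x (n + 1)) := by
        rw [hxb (n + 1), hxb n]
        have h : Finset.range (n + 1 + 1) = insert (n + 1) (Finset.range (n + 1)) :=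
          Finset.range_add_one
        simp only [h, Finset.sup'_insert]
        rw [max_comm]
        exact Finset.sup'_insert (H := Finset.nonempty_range_add_one) (f := x) (b := n + 1)
      rw [Finset.sum_Icc_succ_top (by omega : 1 ≤ n + 1)]
      simp only [Nat.add_sub_cancel]
      rcases le_or_gt lam (xb n) with h | h
      · -- xb n ≥ lam, so xb (n+1) ≥ lam
        have h1 : lam ≤ xb (n + 1) := by rw [hstep]; exact le_max_of_le_left h
        rw [if_pos h1, if_neg (not_lt.mpr h1), if_neg (not_lt.mpr h)]
        rw [if_pos h, if_neg (not_lt.mpr h)] at ih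
        linarith
      · -- xb n < lam
        rw [if_pos h]
        rw [if_neg (not_le.mpr h), if_pos h] at ih
        rcases le_or_gt lam (xb (n + 1)) with h2 | h2
        · have hx : lam ≤ x (n + 1) := by
            rw [hstep] at h2
            rcases le_max_iff.mp h2 with h3 | h3
            · linarith
            · exact h3
          rw [if_pos h2, if_neg (not_lt.mpr h2)]
          linarith
        · rw [if_neg (not_le.mpr h2), if_pos h2]
          linarith
  linarith [key n]
end

section
/- For any real numbers x_0, ..., x_n and any real λ, writing x̄_k = max{x_0, ..., x_k}, we have λ·1{x̄_n ≥ λ} ≤ −(x_0 − λ)·1{x_0 ≥ λ} − Σ_{k=1}^n 1{x̄_{k-1} ≥ λ}·(x_k − x_{k-1}) + x_n·1{x̄_n ≥ λ}. -/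
open Finset

theorem stmt1 (n : ℕ) (x : ℕ → ℝ) (lam : ℝ) (xb : ℕ → ℝ)
    (hxb : ∀ k, xb k = (Finset.range (k + 1)).sup' Finset.nonempty_range_add_one x) :
    lam * (if lam ≤ xb n then (1 : ℝ) else 0) ≤
      -((x 0 - lam) * (if lam ≤ x 0 then (1 : ℝ) else 0))
        - ∑ k ∈ Finset.Icc 1 n, (if lam ≤ xb (k - 1) then (1 : ℝ) else 0) * (x k - x (k - 1))
        + x n * (if lam ≤ xb n then (1 : ℝ) else 0) := by
  have hps : ∀ k, xb k = partialSups x k := fun k =>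
    (hxb k).trans (partialSups_eq_sup'_range x k).symm
  induction n with
  | zero =>
      have h0 : xb 0 = x 0 := by simp [hps 0]
      rw [h0]
      simp only [Finset.Icc_self, Finset.Icc_eq_empty_of_lt Nat.zero_lt_one,
        Finset.sum_empty]
      split_ifs <;> ring_nf <;> simp
  | succ n ih =>
      have hstep : xb (n + 1) = xb n ⊔ x (n + 1) := by
        rw [hps (n + 1), hps n]; exact partialSups_succ x n
      rw [Finset.sum_Icc_succ_top (Nat.le_add_left 1 n)]
      simp only [Nat.add_sub_cancel, hstep, le_sup_iff]
      by_cases h2 : lam ≤ xb n <;> by_cases h0 : lam ≤ x 0 <;>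
        by_cases h3 : lam ≤ x (n + 1) <;>
        simp only [h2, h0, h3, or_true, true_or, or_false, false_or,
          if_true, if_false] at ih ⊢ <;> linarith
end

section
/- In the pathwise inequality λ·1{x̄_n ≥ λ} ≤ min(x_0, λ) + Σ_{k=1}^n 1{x̄_{k-1} < λ}·(x_k − x_{k-1}) − x_n·1{x̄_n < λ}, equality holds whenever x̄_n < λ or x_0 ≥ λ; and if j ∈ {1,...,n} is the first index with x_j ≥ λ (so x̄_{j-1} < λ ≤ x_j), the difference between the right-hand and left-hand sides equals x_j − λ. -/
open Finset

private lemma tele (x : ℕ → ℝ) : ∀ j, ∑ k ∈ Finset.Ioc 0 j, (x k - x (k-1)) = x j - x 0 := by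
  intro j
  induction j with
  | zero => simp
  | succ m ih =>
    rw [Finset.sum_Ioc_succ_top (Nat.zero_le _), ih]
    simp

private lemma key (x c : ℕ → ℝ) (j n : ℕ) (hj : j ≤ n)
    (h1 : ∀ k, 1 ≤ k → k ≤ j → c k = 1) (h0 : ∀ k, j < k → k ≤ n → c k = 0) :
    ∑ k ∈ Finset.Icc 1 n, c k * (x k - x (k-1)) = x j - x 0 := by
  rw [show Finset.Icc 1 n = Finset.Ioc 0 n from Finset.Icc_add_one_left_eq_Ioc 0 n,
    ← Finset.sum_Ioc_consecutive _ (Nat.zero_le j) hj]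
  have h2 : ∑ k ∈ Finset.Ioc j n, c k * (x k - x (k-1)) = 0 := by
    apply Finset.sum_eq_zero
    intro k hk
    rw [Finset.mem_Ioc] at hk
    rw [h0 k hk.1 hk.2, zero_mul]
  have h3 : ∑ k ∈ Finset.Ioc 0 j, c k * (x k - x (k-1)) = ∑ k ∈ Finset.Ioc 0 j, (x k - x (k-1)) := by
    apply Finset.sum_congr rfl
    intro k hk
    rw [Finset.mem_Ioc] at hk
    rw [h1 k hk.1 (hk.2), one_mul]
  rw [h2, h3, tele, add_zero]

theorem stmt2 (n : ℕ) (x : ℕ → ℝ) (lam : ℝ) (xb : ℕ → ℝ)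
    (hxb : ∀ k, xb k = (Finset.range (k + 1)).sup' Finset.nonempty_range_add_one x) :
    ((xb n < lam ∨ lam ≤ x 0) →
      lam * (if lam ≤ xb n then (1 : ℝ) else 0) =
        min (x 0) lam
          + ∑ k ∈ Finset.Icc 1 n, (if xb (k - 1) < lam then (1 : ℝ) else 0) * (x k - x (k - 1))
          - x n * (if xb n < lam then (1 : ℝ) else 0)) ∧
    (∀ j, 1 ≤ j → j ≤ n → xb (j - 1) < lam → lam ≤ x j →
      (min (x 0) lam
          + ∑ k ∈ Finset.Icc 1 n, (if xb (k - 1) < lam then (1 : ℝ) else 0) * (x k - x (k - 1))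
          - x n * (if xb n < lam then (1 : ℝ) else 0))
        - lam * (if lam ≤ xb n then (1 : ℝ) else 0) = x j - lam) := by
  have hle : ∀ i k, i ≤ k → x i ≤ xb k := by
    intro i k hik
    rw [hxb]
    exact Finset.le_sup' x (Finset.mem_range.2 (Nat.lt_succ_of_le hik))
  have hmono : ∀ a b, a ≤ b → xb a ≤ xb b := by
    intro a b hab
    rw [hxb, hxb]
    apply Finset.sup'_le
    intro i hi
    exact Finset.le_sup' x (Finset.mem_range.2 (lt_of_lt_of_le (Finset.mem_range.1 hi) (by omega)))
  constructor
  · rintro (h | h)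
    · -- xb n < lam : everything below lam
      have hx0 : x 0 < lam := lt_of_le_of_lt (hle 0 n (Nat.zero_le n)) h
      have hsum : ∑ k ∈ Finset.Icc 1 n, (if xb (k - 1) < lam then (1 : ℝ) else 0) * (x k - x (k - 1)) = x n - x 0 := by
        apply key x _ n n le_rfl
        · intro k hk1 hkn
          rw [if_pos (lt_of_le_of_lt (hmono (k-1) n (by omega)) h)]
        · intro k hk _; omega
      rw [hsum, if_neg (not_le.2 h), if_pos h, min_eq_left hx0.le]
      ring
    · -- lam ≤ x 0
      have hxbn : lam ≤ xb n := le_trans h (hle 0 n (Nat.zero_le n))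
      have hsum : ∑ k ∈ Finset.Icc 1 n, (if xb (k - 1) < lam then (1 : ℝ) else 0) * (x k - x (k - 1)) = 0 := by
        apply Finset.sum_eq_zero
        intro k hk
        rw [if_neg (not_lt.2 (le_trans h (hle 0 (k-1) (Nat.zero_le _)))), zero_mul]
      rw [hsum, if_pos hxbn, if_neg (not_lt.2 hxbn), min_eq_right h]
      ring
  · intro j hj1 hjn hjb hxj
    have hxbn : lam ≤ xb n := le_trans hxj (hle j n hjn)
    have hx0 : x 0 < lam := lt_of_le_of_lt (hle 0 (j-1) (Nat.zero_le _)) hjb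
    have hsum : ∑ k ∈ Finset.Icc 1 n, (if xb (k - 1) < lam then (1 : ℝ) else 0) * (x k - x (k - 1)) = x j - x 0 := by
      apply key x _ j n hjn
      · intro k hk1 hkj
        rw [if_pos (lt_of_le_of_lt (hmono (k-1) (j-1) (by omega)) hjb)]
      · intro k hjk hkn
        rw [if_neg (not_lt.2 (le_trans hxj (hle j (k-1) (by omega))))]
    rw [hsum, if_pos hxbn, if_neg (not_lt.2 hxbn), min_eq_left hx0.le]
    ring
end

section
/- In the pathwise inequality λ·1{x̄_n ≥ λ} ≤ −(x_0 − λ)·1{x_0 ≥ λ} − Σ_{k=1}^n 1{x̄_{k-1} ≥ λ}·(x_k − x_{k-1}) + x_n·1{x̄_n ≥ λ}, equality holds whenever x̄_n < λ or x_0 ≥ λ; and if j ∈ {1,...,n} is the first index with x_j ≥ λ, the difference between the right-hand and left-hand sides equals x_j − λ. -/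
open Finset

lemma tele_aux (x : ℕ → ℝ) : ∀ n j, j ≤ n →
    ∑ k ∈ Finset.Ioc j n, (x k - x (k - 1)) = x n - x j := by
  intro n
  induction n with
  | zero => intro j hj; interval_cases j; simp
  | succ n ih =>
    intro j hj
    rcases eq_or_lt_of_le hj with rfl | h
    · simp
    · have hj' : j ≤ n := Nat.lt_succ_iff.mp h
      rw [Finset.sum_Ioc_succ_top hj', ih j hj']
      simp

theorem stmt3 (n : ℕ) (x : ℕ → ℝ) (lam : ℝ) (xb : ℕ → ℝ)
    (hxb : ∀ k, xb k = (Finset.range (k + 1)).sup' Finset.nonempty_range_add_one x) :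
    ((xb n < lam ∨ lam ≤ x 0) →
      lam * (if lam ≤ xb n then (1 : ℝ) else 0) =
        -((x 0 - lam) * (if lam ≤ x 0 then (1 : ℝ) else 0))
          - ∑ k ∈ Finset.Icc 1 n, (if lam ≤ xb (k - 1) then (1 : ℝ) else 0) * (x k - x (k - 1))
          + x n * (if lam ≤ xb n then (1 : ℝ) else 0)) ∧
    (∀ j, 1 ≤ j → j ≤ n → xb (j - 1) < lam → lam ≤ x j →
      (-((x 0 - lam) * (if lam ≤ x 0 then (1 : ℝ) else 0))
          - ∑ k ∈ Finset.Icc 1 n, (if lam ≤ xb (k - 1) then (1 : ℝ) else 0) * (x k - x (k - 1))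
          + x n * (if lam ≤ xb n then (1 : ℝ) else 0))
        - lam * (if lam ≤ xb n then (1 : ℝ) else 0) = x j - lam) := by
  have hx_le : ∀ k m, k ≤ m → x k ≤ xb m := by
    intro k m h
    rw [hxb]
    exact Finset.le_sup' x (Finset.mem_range.mpr (by omega))
  have hmono : ∀ a b, a ≤ b → xb a ≤ xb b := by
    intro a b h
    rw [hxb a]
    exact Finset.sup'_le _ _ fun i hi =>
      hx_le i b (by have := Finset.mem_range.mp hi; omega)
  have hicc : Finset.Icc 1 n = Finset.Ioc 0 n := Finset.Icc_add_one_left_eq_Ioc 0 n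
  constructor
  · rintro (hlt | h0)
    · have hneg : ¬ lam ≤ xb n := not_le.mpr hlt
      have h0' : ¬ lam ≤ x 0 := not_le.mpr (lt_of_le_of_lt (hx_le 0 n (Nat.zero_le _)) hlt)
      rw [if_neg hneg, if_neg h0']
      have hsum : ∑ k ∈ Finset.Icc 1 n,
          (if lam ≤ xb (k - 1) then (1 : ℝ) else 0) * (x k - x (k - 1)) = 0 := by
        apply Finset.sum_eq_zero
        intro k hk
        have hk' := Finset.mem_Icc.mp hk
        have : ¬ lam ≤ xb (k - 1) :=
          not_le.mpr (lt_of_le_of_lt (hmono (k - 1) n (by omega)) hlt)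
        rw [if_neg this]; ring
      rw [hsum]; ring
    · have hn : lam ≤ xb n := le_trans h0 (hx_le 0 n (Nat.zero_le _))
      rw [if_pos hn, if_pos h0]
      have hsum : ∑ k ∈ Finset.Icc 1 n,
          (if lam ≤ xb (k - 1) then (1 : ℝ) else 0) * (x k - x (k - 1))
          = x n - x 0 := by
        rw [hicc]
        rw [Finset.sum_congr rfl (fun k hk => ?_), tele_aux x n 0 (Nat.zero_le _)]
        have : lam ≤ xb (k - 1) := le_trans h0 (hx_le 0 (k - 1) (Nat.zero_le _))
        rw [if_pos this, one_mul]
      rw [hsum]; ring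
  · intro j hj1 hjn hjlt hjx
    have hn : lam ≤ xb n := le_trans hjx (hx_le j n hjn)
    have h0' : ¬ lam ≤ x 0 :=
      not_le.mpr (lt_of_le_of_lt (hx_le 0 (j - 1) (Nat.zero_le _)) hjlt)
    rw [if_pos hn, if_neg h0']
    have hsum : ∑ k ∈ Finset.Icc 1 n,
        (if lam ≤ xb (k - 1) then (1 : ℝ) else 0) * (x k - x (k - 1))
        = x n - x j := by
      rw [hicc, ← Finset.sum_Ioc_consecutive _ (Nat.zero_le j) hjn]
      have h1 : ∑ k ∈ Finset.Ioc 0 j,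
          (if lam ≤ xb (k - 1) then (1 : ℝ) else 0) * (x k - x (k - 1)) = 0 := by
        apply Finset.sum_eq_zero
        intro k hk
        have hk' := Finset.mem_Ioc.mp hk
        have : ¬ lam ≤ xb (k - 1) :=
          not_le.mpr (lt_of_le_of_lt (hmono (k - 1) (j - 1) (by omega)) hjlt)
        rw [if_neg this]; ring
      have h2 : ∑ k ∈ Finset.Ioc j n,
          (if lam ≤ xb (k - 1) then (1 : ℝ) else 0) * (x k - x (k - 1))
          = x n - x j := by
        rw [Finset.sum_congr rfl (fun k hk => ?_), tele_aux x n j hjn]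
        have hk' := Finset.mem_Ioc.mp hk
        have : lam ≤ xb (k - 1) := le_trans hjx (hx_le j (k - 1) (by omega))
        rw [if_pos this, one_mul]
      rw [h1, h2, zero_add]
    rw [hsum]; ring
end

section
/- If X = (X_k)_{k=0,...,n} is a supermartingale with respect to a filtration (𝓕_k) on a probability space, then for every λ ∈ ℝ, λ·P(X̄_n ≥ λ) ≤ E[min(X_0, λ)] − ∫_{{X̄_n < λ}} X_n dP, where X̄_n = max{X_0, ..., X_n}. -/
open MeasureTheory Finset

theorem stmt4 {Ω : Type*} {m0 : MeasurableSpace Ω} {μ : Measure Ω} [IsProbabilityMeasure μ]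
    (ℱ : Filtration ℕ m0) (X : ℕ → Ω → ℝ) (n : ℕ)
    (hX : Supermartingale X ℱ μ) (lam : ℝ) :
    lam * (μ {ω | lam ≤ (Finset.range (n + 1)).sup' Finset.nonempty_range_add_one
        (fun k => X k ω)}).toReal ≤
      (∫ ω, min (X 0 ω) lam ∂μ)
        - ∫ ω in {ω | (Finset.range (n + 1)).sup' Finset.nonempty_range_add_one
            (fun k => X k ω) < lam}, X n ω ∂μ := by
  classical
  set M : Ω → ℝ := fun ω => (Finset.range (n + 1)).sup' Finset.nonempty_range_add_one
      (fun k => X k ω) with hMdef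
  have hMmeas : Measurable M :=
    Finset.measurable_range_sup'' fun k _ => (hX.stronglyMeasurable k).measurable.le (ℱ.le k)
  set A : Set Ω := {ω | lam ≤ M ω} with hAdef
  have hA : MeasurableSet A := measurableSet_le measurable_const hMmeas
  have hAc : {ω | M ω < lam} = Aᶜ := by
    ext ω; simp [hAdef, not_le]
  set τ : Ω → WithTop ℕ := fun ω => ((hittingBtwn X (Set.Ici lam) 0 n ω : ℕ) : WithTop ℕ)
    with hτdef
  have hτ : IsStoppingTime ℱ τ :=
    Adapted.isStoppingTime_hittingBtwn hX.stronglyAdapted.adapted measurableSet_Ici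
  have hτ_le : ∀ ω, τ ω ≤ n := fun ω => WithTop.coe_le_coe.2 (hittingBtwn_le ω)
  have hSVint : Integrable (stoppedValue X τ) μ :=
    integrable_stoppedValue ℕ hτ hX.integrable hτ_le
  -- optional stopping: E[X_τ] ≤ E[X_0]
  have hOS : ∫ ω, stoppedValue X τ ω ∂μ ≤ ∫ ω, X 0 ω ∂μ := by
    have h := hX.neg.expected_stoppedValue_mono (isStoppingTime_const ℱ 0) hτ
      (fun ω => WithTop.coe_le_coe.2 (Nat.zero_le _)) hτ_le
    rw [stoppedValue_const] at h
    have h1 : stoppedValue (-X) τ = fun ω => -stoppedValue X τ ω := rfl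
    rw [h1] at h
    simp only [Pi.neg_apply, integral_neg, neg_le_neg_iff] at h
    exact h
  -- on A, lam ≤ stoppedValue
  have hmemA : ∀ ω ∈ A, lam ≤ stoppedValue X τ ω := by
    intro ω hω
    have hx : ∃ j ∈ Set.Icc 0 n, X j ω ∈ Set.Ici lam := by
      have := hω
      simp only [hAdef, Set.mem_setOf_eq, hMdef, le_sup'_iff, mem_range,
        Nat.lt_succ_iff] at this
      obtain ⟨j, hj1, hj2⟩ := this
      exact ⟨j, ⟨Nat.zero_le _, hj1⟩, hj2⟩
    exact stoppedValue_hittingBtwn_mem hx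
  -- outside A, τ = n
  have hnotA : ∀ ω ∉ A, τ ω = n := by
    intro ω hω
    simp only [hAdef, Set.mem_setOf_eq, not_le, hMdef] at hω
    simp only [hτdef, WithTop.coe_inj, hittingBtwn, Set.mem_Ici, ite_eq_right_iff]
    refine congrArg _ ?_
    rw [ite_eq_right_iff]
    intro hm
    obtain ⟨m, hm1, hm2⟩ := hm
    exfalso
    exact absurd ((le_sup'_iff _).2 ⟨m, mem_range.2 (Nat.lt_succ_of_le hm1.2), hm2⟩)
      (not_le.2 hω)
  -- if lam ≤ X 0 ω then τ ω = 0
  have hzero : ∀ ω, lam ≤ X 0 ω → τ ω = 0 := fun ω hω =>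
    by simp only [hτdef]
       exact_mod_cast Nat.le_zero.1 (hittingBtwn_le_of_mem le_rfl (Nat.zero_le n) hω)
  -- pointwise inequality
  have hpt : ∀ ω, A.indicator (fun _ => lam) ω + Aᶜ.indicator (X n) ω ≤
      min (X 0 ω) lam + (stoppedValue X τ ω - X 0 ω) := by
    intro ω
    by_cases hω : ω ∈ A
    · rw [Set.indicator_of_mem hω, Set.indicator_of_notMem (by simpa using hω), add_zero]
      by_cases h0 : lam ≤ X 0 ω
      · have ht0 : τ ω = 0 := hzero ω h0
        have : stoppedValue X τ ω = X 0 ω := by rw [stoppedValue, ht0]; rfl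
        rw [this, min_eq_right h0]
        linarith
      · push_neg at h0
        rw [min_eq_left h0.le]
        have := hmemA ω hω
        linarith
    · rw [Set.indicator_of_notMem hω, Set.indicator_of_mem (by simpa using hω), zero_add]
      have hXn : stoppedValue X τ ω = X n ω := by rw [stoppedValue, hnotA ω hω]; rfl
      have hle0 : X 0 ω ≤ M ω := le_sup' (fun k => X k ω) (mem_range.2 n.succ_pos)
      have h0 : X 0 ω < lam := lt_of_le_of_lt hle0 (by
        simpa only [hAdef, Set.mem_setOf_eq, not_le] using hω)
      rw [min_eq_left h0.le]
      linarith
  -- integrability of the two sides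
  have hintL : Integrable (fun ω => A.indicator (fun _ => lam) ω + Aᶜ.indicator (X n) ω) μ :=
    ((integrable_const lam).indicator hA).add ((hX.integrable n).indicator hA.compl)
  have hminInt : Integrable (fun ω => min (X 0 ω) lam) μ :=
    (hX.integrable 0).inf (integrable_const lam)
  have hsubInt : Integrable (fun ω => stoppedValue X τ ω - X 0 ω) μ :=
    hSVint.sub (hX.integrable 0)
  have hintR : Integrable (fun ω => min (X 0 ω) lam + (stoppedValue X τ ω - X 0 ω)) μ :=
    hminInt.add hsubInt
  have hint : ∫ ω, (A.indicator (fun _ => lam) ω + Aᶜ.indicator (X n) ω) ∂μ ≤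
      ∫ ω, (min (X 0 ω) lam + (stoppedValue X τ ω - X 0 ω)) ∂μ :=
    integral_mono hintL hintR hpt
  rw [integral_add ((integrable_const lam).indicator hA) ((hX.integrable n).indicator hA.compl),
    integral_add hminInt hsubInt,
    integral_indicator hA, integral_indicator hA.compl,
    setIntegral_const, integral_sub hSVint (hX.integrable 0)] at hint
  rw [hAc]
  have : μ.real A • lam = lam * (μ A).toReal := by rw [smul_eq_mul, mul_comm]; rfl
  rw [this] at hint
  linarith
end

section
/- For nonnegative real numbers x_0, ..., x_n and p > 1 with q = p/(p−1), the pathwise Doob L^p inequality holds: x̄_n^p ≤ q^p x_n^p − q x_0^p − q p Σ_{k=1}^n x̄_{k-1}^{p-1}·(x_k − x_{k-1}), where x̄_k = max{x_0, ..., x_k}. -/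
open Finset

private lemma self_mul_rpow (p : ℝ) (hp : 1 < p) (y : ℝ) (hy : 0 ≤ y) :
    y * y ^ (p - 1) = y ^ p := by
  have h2 := Real.rpow_add' hy (show (1:ℝ) + (p - 1) ≠ 0 by
    intro h; rw [show (1:ℝ) + (p-1) = p by ring] at h; linarith)
  rw [Real.rpow_one, show (1:ℝ) + (p-1) = p by ring] at h2
  exact h2.symm

private lemma key_young (p q : ℝ) (hp : 1 < p) (hq : q = p / (p - 1)) (a b : ℝ)
    (ha : 0 ≤ a) (hab : a ≤ b) :
    (1 / q) * (b ^ p - a ^ p) ≤ b * (b ^ (p - 1) - a ^ (p - 1)) := by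
  have hpq : p.HolderConjugate q := (Real.holderConjugate_iff_eq_conjExponent hp).2 hq
  have hb : 0 ≤ b := ha.trans hab
  have hY := Real.young_inequality_of_nonneg hb (Real.rpow_nonneg ha (p - 1)) hpq
  have hap : (a ^ (p - 1)) ^ q = a ^ p := by
    rw [← Real.rpow_mul ha, mul_comm (p-1) q, mul_comm q (p-1), hpq.sub_one_mul_conj]
  rw [hap] at hY
  have hself : b * b ^ (p - 1) = b ^ p := self_mul_rpow p hp b hb
  have hq0 : 0 < q := hpq.symm.pos
  have hp0 : 0 < p := hpq.pos
  have hinv : 1 / p + 1 / q = 1 := by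
    rw [one_div, one_div]; exact hpq.inv_add_inv_eq_one
  have e : b * (b ^ (p - 1) - a ^ (p - 1)) = b ^ p - b * a ^ (p - 1) := by
    rw [mul_sub, hself]
  rw [e]
  have h5 : (1 / q) * b ^ p = b ^ p - (1 / p) * b ^ p := by
    have h6 : (1:ℝ) / q = 1 - 1 / p := by linarith
    rw [h6]; ring
  have h1 : b * a ^ (p - 1) ≤ (1/p) * b ^ p + (1/q) * a ^ p := by
    have : b ^ p / p = (1/p) * b ^ p := by ring
    have : a ^ p / q = (1/q) * a ^ p := by ring
    calc b * a ^ (p-1) ≤ b ^ p / p + a ^ p / q := hY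
      _ = (1/p) * b ^ p + (1/q) * a ^ p := by ring
  linarith [h1, h5]

theorem stmt6 (n : ℕ) (x : ℕ → ℝ) (hx : ∀ k, 0 ≤ x k) (p : ℝ) (hp : 1 < p)
    (q : ℝ) (hq : q = p / (p - 1)) (xb : ℕ → ℝ)
    (hxb : ∀ k, xb k = (Finset.range (k + 1)).sup' Finset.nonempty_range_add_one x) :
    xb n ^ p ≤ q ^ p * x n ^ p - q * x 0 ^ p
      - q * p * ∑ k ∈ Finset.Icc 1 n, xb (k - 1) ^ (p - 1) * (x k - x (k - 1)) := by
  have hpq : p.HolderConjugate q := (Real.holderConjugate_iff_eq_conjExponent hp).2 hq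
  have hq0 : 0 < q := hpq.symm.pos
  have hp0 : 0 < p := hpq.pos
  -- basic facts about xb
  have hM0 : xb 0 = x 0 := by simp [hxb 0]
  have hMs : ∀ k, xb (k + 1) = max (xb k) (x (k + 1)) := by
    intro k
    apply le_antisymm
    · rw [hxb (k + 1)]
      apply Finset.sup'_le
      intro i hi
      rcases Nat.lt_succ_iff_lt_or_eq.mp (Finset.mem_range.mp hi) with h | h
      · exact le_max_of_le_left (by rw [hxb k]; exact Finset.le_sup' x (Finset.mem_range.mpr h))
      · rw [h]; exact le_max_right _ _
    · apply max_le
      · rw [hxb k, hxb (k + 1)]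
        apply Finset.sup'_le; intro i hi
        exact Finset.le_sup' x (Finset.mem_range.mpr (Nat.lt_succ_of_lt (Finset.mem_range.mp hi)))
      · rw [hxb (k + 1)]; exact Finset.le_sup' x (Finset.self_mem_range_succ (k + 1))
  have hMx : ∀ k, x k ≤ xb k := by
    intro k
    rw [hxb k]
    exact Finset.le_sup' x (Finset.self_mem_range_succ k)
  have hM0le : ∀ k, 0 ≤ xb k := fun k => (hx k).trans (hMx k)
  -- main inductive inequality
  have hsum : ∀ m : ℕ,
      ∑ k ∈ Finset.Icc 1 m, xb (k - 1) ^ (p - 1) * (x k - x (k - 1))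
        ≤ x m * xb m ^ (p - 1) - x 0 ^ p + (1 / q) * (x 0 ^ p - xb m ^ p) := by
    intro m
    induction m with
    | zero =>
      simp only [Finset.Icc_self, Icc_eq_empty_of_lt (by norm_num : (1:ℕ) > 0)]
      simp [hM0, self_mul_rpow p hp (x 0) (hx 0)]
    | succ m ih =>
      rw [Finset.sum_Icc_succ_top (Nat.one_le_iff_ne_zero.mpr (Nat.succ_ne_zero m))]
      simp only [Nat.add_sub_cancel]
      have hkey : (1 / q) * (xb (m + 1) ^ p - xb m ^ p)
          ≤ x (m + 1) * (xb (m + 1) ^ (p - 1) - xb m ^ (p - 1)) := by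
        rcases eq_or_ne (xb (m + 1)) (xb m) with h | h
        · rw [h]; simp
        · have hx1 : xb (m + 1) = x (m + 1) := by
            rw [hMs m] at h ⊢
            rcases max_cases (xb m) (x (m + 1)) with ⟨h1, _⟩ | ⟨h1, _⟩
            · exact absurd h1 h
            · exact h1
          rw [hx1]
          exact key_young p q hp hq (xb m) (x (m + 1)) (hM0le m)
            (by rw [hMs m] at hx1; rw [← hx1]; exact le_max_left _ _)
      nlinarith [hkey, ih]
  have hS := hsum n
  -- final Young step
  have hY := Real.young_inequality_of_nonneg (mul_nonneg hq0.le (hx n))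
      (Real.rpow_nonneg (hM0le n) (p - 1)) hpq
  have hMq : (xb n ^ (p - 1)) ^ q = xb n ^ p := by
    rw [← Real.rpow_mul (hM0le n), mul_comm (p-1) q, mul_comm q (p-1), hpq.sub_one_mul_conj]
  have hqxp : (q * x n) ^ p = q ^ p * x n ^ p :=
    Real.mul_rpow hq0.le (hx n)
  rw [hMq, hqxp] at hY
  -- p/q = p - 1
  have hdiv : p / q = p - 1 := hpq.div_conj_eq_sub_one
  -- multiply hS by q*p > 0 and combine
  have hqp : 0 < q * p := mul_pos hq0 hp0
  have hS' : q * p * (∑ k ∈ Finset.Icc 1 n, xb (k - 1) ^ (p - 1) * (x k - x (k - 1)))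
      ≤ q * p * (x n * xb n ^ (p - 1)) - q * p * x 0 ^ p + p * (x 0 ^ p - xb n ^ p) := by
    have h7 := mul_le_mul_of_nonneg_left hS hqp.le
    have heq : q * p * (x n * xb n ^ (p - 1) - x 0 ^ p + 1 / q * (x 0 ^ p - xb n ^ p))
        = q * p * (x n * xb n ^ (p - 1)) - q * p * x 0 ^ p + p * (x 0 ^ p - xb n ^ p) := by
      field_simp
    exact h7.trans_eq heq
  have hY' : q * p * (x n * xb n ^ (p - 1)) ≤ q ^ p * x n ^ p + (p - 1) * xb n ^ p := by
    have h2 := mul_le_mul_of_nonneg_left hY hp0.le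
    have e1 : p * (q ^ p * x n ^ p / p) = q ^ p * x n ^ p := by field_simp
    have e2 : p * (xb n ^ p / q) = (p - 1) * xb n ^ p := by
      rw [← hdiv]; ring
    calc q * p * (x n * xb n ^ (p - 1)) = p * (q * x n * xb n ^ (p - 1)) := by ring
      _ ≤ p * (q ^ p * x n ^ p / p + xb n ^ p / q) := h2
      _ = q ^ p * x n ^ p + (p - 1) * xb n ^ p := by rw [mul_add, e1, e2]
  have hzero : q * p - q - p = 0 := by
    have := hpq.mul_eq_add; linarith [this]
  have hz2 : (q * p - q - p) * x 0 ^ p = 0 := by rw [hzero]; ring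
  linarith [hS', hY', hz2]
end

section
/- If X = (X_k)_{k=0,...,n} is a nonnegative submartingale with E[X_n^p] < ∞ for some p > 1, and q = p/(p−1), then E[X̄_n^p] ≤ q^p E[X_n^p] − q E[X_0^p], where X̄_n = max{X_0, ..., X_n}. -/
open MeasureTheory Finset
open scoped ENNReal


section Det

variable {p q : ℝ}

lemma conj_facts (hpq : p.HolderConjugate q) : q + p = p * q := by
  have h := hpq.inv_add_inv_eq_one
  have hp0 : p ≠ 0 := hpq.ne_zero
  have hq0 : q ≠ 0 := hpq.symm.ne_zero
  field_simp at h
  linarith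

lemma conj_qeq (hpq : p.HolderConjugate q) : (p - 1) * q = p := by
  linear_combination - conj_facts hpq

/-- Scaled Young inequality. -/
lemma young_scaled (hpq : p.HolderConjugate q) {x y t : ℝ}
    (hx : 0 ≤ x) (hy : 0 ≤ y) (ht : 0 < t) :
    x ^ (p - 1) * y ≤ t / q * x ^ p + t ^ (1 - p) / p * y ^ p := by
  have hp1 : 0 < p - 1 := sub_pos.2 hpq.lt
  have hq0 : 0 < q := hpq.symm.pos
  have hq_eq : (p - 1) * q = p := conj_qeq hpq
  set s : ℝ := t ^ (-(1 / q)) with hs_def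
  have hs : 0 < s := Real.rpow_pos_of_pos ht _
  have hxp : (0 : ℝ) ≤ x ^ (p - 1) := Real.rpow_nonneg hx _
  have key := Real.young_inequality_of_nonneg
    (div_nonneg hxp hs.le) (mul_nonneg hs.le hy) hpq.symm
  have e1 : x ^ (p - 1) / s * (s * y) = x ^ (p - 1) * y := by
    field_simp
  have hsq : s ^ q = t⁻¹ := by
    rw [hs_def, ← Real.rpow_mul ht.le]
    rw [show -(1 / q) * q = -1 by field_simp, Real.rpow_neg_one]
  have hsp : s ^ p = t ^ (1 - p) := by
    rw [hs_def, ← Real.rpow_mul ht.le]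
    congr 1
    have h2 : (1 - p) * q = -p := by linear_combination - hq_eq
    field_simp
    linear_combination - h2
  have e2 : (x ^ (p - 1) / s) ^ q = t * x ^ p := by
    rw [Real.div_rpow hxp hs.le, ← Real.rpow_mul hx, hq_eq, hsq]
    field_simp
  have e3 : (s * y) ^ p = t ^ (1 - p) * y ^ p := by
    rw [Real.mul_rpow hs.le hy, hsp]
  rw [e1, e2, e3] at key
  calc x ^ (p - 1) * y ≤ t * x ^ p / q + t ^ (1 - p) * y ^ p / p := key
    _ = t / q * x ^ p + t ^ (1 - p) / p * y ^ p := by ring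

lemma max_rpow_step (hpq : p.HolderConjugate q) {b c : ℝ}
    (hb : 0 ≤ b) (hc : 0 ≤ c) :
    1 / q * (max c b ^ p - b ^ p) ≤ c * (max c b ^ (p - 1) - b ^ (p - 1)) := by
  have hq0 : 0 < q := hpq.symm.pos
  have hp0 : 0 < p := hpq.pos
  have hq_eq : (p - 1) * q = p := conj_qeq hpq
  have h1 : 1 / p + 1 / q = 1 := by
    have := hpq.inv_add_inv_eq_one; simpa [one_div] using this
  rcases le_total c b with h | h
  · rw [max_eq_right h]; simp
  · rw [max_eq_left h]
    by_cases hc0 : c = 0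
    · have hb0 : b = 0 := le_antisymm (hc0 ▸ h) hb
      simp [hc0, hb0, Real.zero_rpow (ne_of_gt hp0)]
    have young := Real.young_inequality_of_nonneg hc (Real.rpow_nonneg hb (p - 1)) hpq
    rw [← Real.rpow_mul hb, hq_eq] at young
    -- young : c * b ^ (p-1) ≤ c ^ p / p + b ^ p / q
    have hcc : c ^ (p - 1) * c = c ^ p := by
      have := Real.rpow_add_one hc0 (p - 1)
      rw [sub_add_cancel] at this
      linarith [this]
    have e : 1 / q * (c ^ p - b ^ p) = c ^ p - c ^ p / p - 1 / q * b ^ p := by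
      have h2 : 1 / q = 1 - 1 / p := by linarith
      rw [h2]; ring
    have e3 : c * (c ^ (p - 1) - b ^ (p - 1)) = c ^ p - c * b ^ (p - 1) := by
      rw [mul_sub, mul_comm c (c ^ (p - 1)), hcc]
    rw [e3]
    have e2 : 1 / q * b ^ p = b ^ p / q := by ring
    linarith [young, e, e2]

end Det

section Path

variable {p q : ℝ} (hpq : p.HolderConjugate q) (a : ℕ → ℝ) (ha : ∀ k, 0 ≤ a k)

lemma sup'_range_zero : (range (0 + 1)).sup' nonempty_range_add_one a = a 0 := by
  simp

lemma sup'_range_succ (k : ℕ) :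
    (range (k + 1 + 1)).sup' nonempty_range_add_one a
      = max (a (k + 1)) ((range (k + 1)).sup' nonempty_range_add_one a) := by
  apply le_antisymm
  · refine Finset.sup'_le _ _ fun i hi => ?_
    have hi' := Finset.mem_range.1 hi
    rcases Nat.lt_succ_iff_lt_or_eq.1 hi' with h | h
    · exact le_max_of_le_right (Finset.le_sup' a (Finset.mem_range.2 h))
    · subst h; exact le_max_left _ _
  · refine max_le (Finset.le_sup' a (Finset.mem_range.2 (by omega))) ?_
    refine Finset.sup'_le _ _ fun i hi => ?_
    have hi' := Finset.mem_range.1 hi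
    exact Finset.le_sup' a (Finset.mem_range.2 (by omega))

include ha in
lemma sup'_nonneg_of (k : ℕ) : 0 ≤ (range (k + 1)).sup' nonempty_range_add_one a :=
  le_trans (ha 0) (Finset.le_sup' a (Finset.mem_range.2 k.succ_pos))

include hpq ha in
lemma Hlemma : ∀ n : ℕ,
    1 / q * ((range (n + 1)).sup' nonempty_range_add_one a) ^ p + 1 / p * a 0 ^ p
      + ∑ k ∈ range n,
          ((range (k + 1)).sup' nonempty_range_add_one a) ^ (p - 1) * (a (k + 1) - a k)
      ≤ ((range (n + 1)).sup' nonempty_range_add_one a) ^ (p - 1) * a n := by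
  have hp0 : 0 < p := hpq.pos
  have hq0 : 0 < q := hpq.symm.pos
  have h1 : 1 / p + 1 / q = 1 := by
    have := hpq.inv_add_inv_eq_one; simpa [one_div] using this
  intro n
  induction n with
  | zero =>
      rw [sup'_range_zero]
      simp only [range_zero, sum_empty, add_zero]
      by_cases h0 : a 0 = 0
      · simp [h0, Real.zero_rpow (ne_of_gt hp0)]
      · have hcc : a 0 ^ (p - 1) * a 0 = a 0 ^ p := by
          have := Real.rpow_add_one h0 (p - 1)
          rw [sub_add_cancel] at this
          linarith [this]
        rw [hcc]
        have h2 : (1 / q) * a 0 ^ p + (1 / p) * a 0 ^ p = (1 / p + 1 / q) * a 0 ^ p := by ring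
        rw [h1, one_mul] at h2
        linarith [h2]
  | succ n ih =>
      rw [Finset.sum_range_succ, sup'_range_succ a n]
      have key := max_rpow_step hpq (b := (range (n + 1)).sup' nonempty_range_add_one a)
        (c := a (n + 1)) (sup'_nonneg_of a ha n) (ha (n + 1))
      set m := (range (n + 1)).sup' nonempty_range_add_one a with hm
      linarith [ih, key]

include hpq ha in
lemma pathwise (n : ℕ) :
    ((range (n + 1)).sup' nonempty_range_add_one a) ^ p
      ≤ p * q * (∑ k ∈ range n,
            ((range (k + 1)).sup' nonempty_range_add_one a) ^ (p - 1) * (a k - a (k + 1)))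
        + q ^ p * a n ^ p - q * a 0 ^ p := by
  have hp0 : 0 < p := hpq.pos
  have hq0 : 0 < q := hpq.symm.pos
  have hq_eq : (p - 1) * q = p := conj_qeq hpq
  have h1 : 1 / p + 1 / q = 1 := by
    have := hpq.inv_add_inv_eq_one; simpa [one_div] using this
  have H := Hlemma hpq a ha n
  set m := (range (n + 1)).sup' nonempty_range_add_one a with hm
  have hmnn : 0 ≤ m := sup'_nonneg_of a ha n
  have young := young_scaled hpq (x := m) (y := a n) (t := 1 / q) hmnn (ha n)
    (by positivity)
  -- (1/q)^(1-p) = q^(p-1)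
  have hL : ((1 : ℝ) / q) ^ (1 - p) = q ^ (p - 1) := by
    rw [one_div, Real.inv_rpow hq0.le, ← Real.rpow_neg hq0.le, neg_sub]
  rw [hL] at young
  -- young : m ^ (p-1) * a n ≤ (1/q)/q * m ^ p + q^(p-1)/p * (a n)^p
  have hsum : (∑ k ∈ range n,
        ((range (k + 1)).sup' nonempty_range_add_one a) ^ (p - 1) * (a k - a (k + 1)))
      = - ∑ k ∈ range n,
          ((range (k + 1)).sup' nonempty_range_add_one a) ^ (p - 1) * (a (k + 1) - a k) := by
    rw [← Finset.sum_neg_distrib]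
    exact Finset.sum_congr rfl fun k _ => by ring
  rw [hsum]
  set S := ∑ k ∈ range n,
      ((range (k + 1)).sup' nonempty_range_add_one a) ^ (p - 1) * (a (k + 1) - a k) with hS
  -- combine H and young
  have comb : (1 / q - 1 / q / q) * m ^ p ≤ - S + q ^ (p - 1) / p * a n ^ p - 1 / p * a 0 ^ p := by
    linarith [H, young]
  have hc : 1 / q - 1 / q / q = 1 / (p * q) := by
    field_simp
    linear_combination (-1 : ℝ) * conj_facts hpq
  rw [hc] at comb
  have hpq0 : 0 < p * q := mul_pos hp0 hq0
  have comb2 : m ^ p ≤ (p * q) * (- S + q ^ (p - 1) / p * a n ^ p - 1 / p * a 0 ^ p) := by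
    have step := mul_le_mul_of_nonneg_left comb hpq0.le
    calc m ^ p = (p * q) * (1 / (p * q) * m ^ p) := by field_simp
      _ ≤ (p * q) * (- S + q ^ (p - 1) / p * a n ^ p - 1 / p * a 0 ^ p) := step
  have hqp : q ^ (p - 1) * q = q ^ p := by
    have := Real.rpow_add_one (ne_of_gt hq0) (p - 1)
    rw [sub_add_cancel] at this
    linarith [this]
  calc m ^ p ≤ (p * q) * (- S + q ^ (p - 1) / p * a n ^ p - 1 / p * a 0 ^ p) := comb2
    _ = p * q * (- S) + (q ^ (p - 1) * q) * a n ^ p - q * a 0 ^ p := by field_simp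
    _ = p * q * (- S) + q ^ p * a n ^ p - q * a 0 ^ p := by rw [hqp]

end Path


section Prob

variable {Ω : Type*} {m0 : MeasurableSpace Ω} {μ : Measure Ω} [IsProbabilityMeasure μ]
  {ℱ : Filtration ℕ m0} {X : ℕ → Ω → ℝ}

lemma sub_step (hX : Submartingale X ℱ μ) {k j : ℕ} (hkj : k ≤ j) {g : Ω → ℝ}
    (hg : StronglyMeasurable[ℱ k] g) (hg0 : 0 ≤ᵐ[μ] g)
    (h1 : Integrable (fun ω => g ω * X k ω) μ)
    (h2 : Integrable (fun ω => g ω * X j ω) μ) :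
    ∫ ω, g ω * X k ω ∂μ ≤ ∫ ω, g ω * X j ω ∂μ := by
  have hle : X k ≤ᵐ[μ] μ[X j | ℱ k] := hX.ae_le_condExp hkj
  have hpull : μ[(fun ω => g ω * X j ω) | ℱ k] =ᵐ[μ] fun ω => g ω * (μ[X j | ℱ k]) ω := by
    have := condExp_mul_of_stronglyMeasurable_left (μ := μ) hg
      (by exact h2) (hX.integrable j)
    exact this
  have hint2 : Integrable (fun ω => g ω * (μ[X j | ℱ k]) ω) μ :=
    integrable_condExp.congr hpull
  calc ∫ ω, g ω * X k ω ∂μ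
      ≤ ∫ ω, g ω * (μ[X j | ℱ k]) ω ∂μ := by
        refine integral_mono_ae h1 hint2 ?_
        filter_upwards [hg0, hle] with ω hgω hleω
        exact mul_le_mul_of_nonneg_left hleω hgω
    _ = ∫ ω, (μ[(fun ω => g ω * X j ω) | ℱ k]) ω ∂μ := (integral_congr_ae hpull).symm
    _ = ∫ ω, g ω * X j ω ∂μ := integral_condExp (ℱ.le k)

lemma memLp_of_sub {p q : ℝ} (hpq : p.HolderConjugate q)
    (hX : Submartingale X ℱ μ) (hpos : ∀ k, 0 ≤ᵐ[μ] X k) {n : ℕ}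
    (hint : Integrable (fun ω => X n ω ^ p) μ) {k : ℕ} (hk : k ≤ n) :
    MemLp (X k) (ENNReal.ofReal p) μ := by
  have hp1 : 1 < p := hpq.lt
  have hp0 : 0 < p := hpq.pos
  have hq0 : 0 < q := hpq.symm.pos
  have hP0 : ENNReal.ofReal p ≠ 0 := by
    simp [ENNReal.ofReal_eq_zero]; linarith
  have hPtop : ENNReal.ofReal p ≠ ∞ := ENNReal.ofReal_ne_top
  set Z : Ω → ℝ := fun ω => max (X k ω) 0 with hZ
  have hZm : Measurable Z :=
    (((hX.stronglyMeasurable k).mono (ℱ.le k)).measurable).max measurable_const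
  have hZae : Z =ᵐ[μ] X k := (hpos k).mono fun ω h => max_eq_left h
  have hZnn : ∀ ω, 0 ≤ Z ω := fun ω => le_max_right _ _
  set K : ℝ := (q / 2) ^ (1 - p) / p with hK
  have hXnnn : 0 ≤ᵐ[μ] fun ω => X n ω ^ p := by
    filter_upwards [hpos n] with ω h using Real.rpow_nonneg h p
  have hIn : 0 ≤ ∫ ω, X n ω ^ p ∂μ := integral_nonneg_of_ae hXnnn
  set C : ℝ := 2 * K * ∫ ω, X n ω ^ p ∂μ with hC
  -- uniform bound on truncations
  have hbound : ∀ m : ℕ, ∫ ω, (min (Z ω) (m : ℝ)) ^ p ∂μ ≤ C := by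
    intro m
    set T : Ω → ℝ := fun ω => min (Z ω) (m : ℝ) with hT
    have hTm : Measurable T := hZm.min measurable_const
    have hT0 : ∀ ω, 0 ≤ T ω := fun ω => le_min (hZnn ω) m.cast_nonneg
    have hTle : ∀ ω, T ω ≤ (m : ℝ) := fun ω => min_le_right _ _
    have hTp_meas : Measurable fun ω => T ω ^ p := hTm.pow_const p
    have hTp_int : Integrable (fun ω => T ω ^ p) μ := by
      refine (integrable_const ((m : ℝ) ^ p)).mono' hTp_meas.aestronglyMeasurable ?_
      refine ae_of_all _ fun ω => ?_
      rw [Real.norm_eq_abs, abs_of_nonneg (Real.rpow_nonneg (hT0 ω) _)]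
      exact Real.rpow_le_rpow (hT0 ω) (hTle ω) hp0.le
    have hg_meas : StronglyMeasurable[ℱ k] fun ω => T ω ^ (p - 1) := by
      have : Measurable[ℱ k] (X k) := (hX.stronglyMeasurable k).measurable
      exact (((this.max measurable_const).min measurable_const).pow_const (p - 1)).stronglyMeasurable
    have hg_bdd : ∃ c : ℝ, ∀ ω, ‖T ω ^ (p - 1)‖ ≤ c := by
      refine ⟨(m : ℝ) ^ (p - 1), fun ω => ?_⟩
      rw [Real.norm_eq_abs, abs_of_nonneg (Real.rpow_nonneg (hT0 ω) _)]
      exact Real.rpow_le_rpow (hT0 ω) (hTle ω) (by linarith)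
    have int_gXk : Integrable (fun ω => T ω ^ (p - 1) * X k ω) μ :=
      (hX.integrable k).bdd_mul
        ((hg_meas.mono (ℱ.le k)).aestronglyMeasurable) (ae_of_all _ hg_bdd.choose_spec)
    have int_gXn : Integrable (fun ω => T ω ^ (p - 1) * X n ω) μ :=
      (hX.integrable n).bdd_mul
        ((hg_meas.mono (ℱ.le k)).aestronglyMeasurable) (ae_of_all _ hg_bdd.choose_spec)
    have step1 : ∫ ω, T ω ^ p ∂μ ≤ ∫ ω, T ω ^ (p - 1) * X k ω ∂μ := by
      refine integral_mono_ae hTp_int int_gXk ?_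
      filter_upwards [hpos k] with ω hω
      have hTX : T ω ≤ X k ω := le_trans (min_le_left _ _) (le_of_eq (max_eq_left hω))
      have hTT : T ω ^ p = T ω ^ (p - 1) * T ω := by
        by_cases ht : T ω = 0
        · rw [ht, Real.zero_rpow (ne_of_gt hp0), mul_zero]
        · have := Real.rpow_add_one ht (p - 1)
          rw [sub_add_cancel] at this
          rw [this]
      rw [hTT]
      exact mul_le_mul_of_nonneg_left hTX (Real.rpow_nonneg (hT0 ω) _)
    have step2 : ∫ ω, T ω ^ (p - 1) * X k ω ∂μ ≤ ∫ ω, T ω ^ (p - 1) * X n ω ∂μ :=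
      sub_step hX hk hg_meas (ae_of_all _ fun ω => Real.rpow_nonneg (hT0 ω) _)
        int_gXk int_gXn
    have step3 : ∫ ω, T ω ^ (p - 1) * X n ω ∂μ
        ≤ ∫ ω, (1 / 2 : ℝ) * T ω ^ p + K * X n ω ^ p ∂μ := by
      refine integral_mono_ae int_gXn ((hTp_int.const_mul _).add (hint.const_mul _)) ?_
      filter_upwards [hpos n] with ω hω
      have hy := young_scaled hpq (x := T ω) (y := X n ω) (t := q / 2) (hT0 ω) hω
        (by linarith)
      have h2 : q / 2 / q = 1 / 2 := by field_simp
      rw [h2] at hy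
      exact hy
    have step4 : ∫ ω, (1 / 2 : ℝ) * T ω ^ p + K * X n ω ^ p ∂μ
        = (1 / 2 : ℝ) * ∫ ω, T ω ^ p ∂μ + K * ∫ ω, X n ω ^ p ∂μ := by
      rw [integral_add (hTp_int.const_mul _) (hint.const_mul _),
        integral_const_mul, integral_const_mul]
    have : ∫ ω, T ω ^ p ∂μ ≤ (1 / 2 : ℝ) * ∫ ω, T ω ^ p ∂μ + K * ∫ ω, X n ω ^ p ∂μ := by
      rw [← step4]; linarith [step1, step2, step3]
    rw [hC]; linarith
  -- pass to the limit
  have hZp_int : Integrable (fun ω => Z ω ^ p) μ := by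
    have key : ∫⁻ ω, ENNReal.ofReal (Z ω ^ p) ∂μ ≤ ENNReal.ofReal C := by
      have hsup : ∀ ω, (⨆ m : ℕ, ENNReal.ofReal ((min (Z ω) (m : ℝ)) ^ p))
          = ENNReal.ofReal (Z ω ^ p) := by
        intro ω
        apply le_antisymm
        · exact iSup_le fun m => ENNReal.ofReal_le_ofReal
            (Real.rpow_le_rpow (le_min (hZnn ω) m.cast_nonneg) (min_le_left _ _) hp0.le)
        · refine le_iSup_of_le ⌈Z ω⌉₊ (le_of_eq ?_)
          rw [min_eq_left (Nat.le_ceil _)]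
      calc ∫⁻ ω, ENNReal.ofReal (Z ω ^ p) ∂μ
          = ∫⁻ ω, ⨆ m : ℕ, ENNReal.ofReal ((min (Z ω) (m : ℝ)) ^ p) ∂μ :=
            lintegral_congr fun ω => (hsup ω).symm
        _ = ⨆ m : ℕ, ∫⁻ ω, ENNReal.ofReal ((min (Z ω) (m : ℝ)) ^ p) ∂μ := by
            refine lintegral_iSup (fun m => ((hZm.min measurable_const).pow_const p).ennreal_ofReal) ?_
            intro i j hij ω
            exact ENNReal.ofReal_le_ofReal
              (Real.rpow_le_rpow (le_min (hZnn ω) i.cast_nonneg)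
                (min_le_min le_rfl (Nat.cast_le.2 hij)) hp0.le)
        _ ≤ ENNReal.ofReal C := by
            refine iSup_le fun m => ?_
            have hTp_int : Integrable (fun ω => (min (Z ω) (m : ℝ)) ^ p) μ := by
              refine (integrable_const ((m : ℝ) ^ p)).mono'
                (((hZm.min measurable_const).pow_const p).aestronglyMeasurable) ?_
              refine ae_of_all _ fun ω => ?_
              have h0 : 0 ≤ min (Z ω) (m : ℝ) := le_min (hZnn ω) m.cast_nonneg
              rw [Real.norm_eq_abs, abs_of_nonneg (Real.rpow_nonneg h0 _)]
              exact Real.rpow_le_rpow h0 (min_le_right _ _) hp0.le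
            rw [← ofReal_integral_eq_lintegral_ofReal hTp_int
              (ae_of_all _ fun ω => Real.rpow_nonneg (le_min (hZnn ω) m.cast_nonneg) _)]
            exact ENNReal.ofReal_le_ofReal (hbound m)
    refine ⟨(hZm.pow_const p).aestronglyMeasurable, ?_⟩
    rw [hasFiniteIntegral_iff_ofReal (ae_of_all _ fun ω => Real.rpow_nonneg (hZnn ω) _)]
    exact lt_of_le_of_lt key ENNReal.ofReal_lt_top
  have hZmem : MemLp Z (ENNReal.ofReal p) μ := by
    have h1 : MemLp (fun ω => ‖Z ω‖ ^ (ENNReal.ofReal p).toReal)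
        (ENNReal.ofReal p / ENNReal.ofReal p) μ := by
      rw [ENNReal.div_self hP0 hPtop, memLp_one_iff_integrable]
      have : (fun ω => ‖Z ω‖ ^ (ENNReal.ofReal p).toReal) = fun ω => Z ω ^ p := by
        funext ω
        rw [ENNReal.toReal_ofReal hp0.le, Real.norm_eq_abs, abs_of_nonneg (hZnn ω)]
      rw [this]
      exact hZp_int
    exact (memLp_norm_rpow_iff hZm.aestronglyMeasurable hP0 hPtop).1 h1
  exact hZmem.ae_eq hZae

end Prob

theorem stmt8 {Ω : Type*} {m0 : MeasurableSpace Ω} {μ : Measure Ω} [IsProbabilityMeasure μ]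
    (ℱ : Filtration ℕ m0) (X : ℕ → Ω → ℝ) (n : ℕ)
    (hX : Submartingale X ℱ μ) (hpos : ∀ k, 0 ≤ᵐ[μ] X k)
    (p : ℝ) (hp : 1 < p) (q : ℝ) (hq : q = p / (p - 1))
    (hint : Integrable (fun ω => X n ω ^ p) μ) :
    (∫ ω, ((Finset.range (n + 1)).sup' Finset.nonempty_range_add_one (fun k => X k ω)) ^ p ∂μ)
      ≤ q ^ p * (∫ ω, X n ω ^ p ∂μ) - q * (∫ ω, X 0 ω ^ p ∂μ) := by
  have hp0 : (0:ℝ) < p := by linarith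
  have hp1' : (0:ℝ) < p - 1 := by linarith
  have hpq : p.HolderConjugate q := by
    exact (Real.holderConjugate_iff_eq_conjExponent hp).2 hq
  have hq0 : 0 < q := hpq.symm.pos
  set P : ℝ≥0∞ := ENNReal.ofReal p with hPdef
  set Q : ℝ≥0∞ := ENNReal.ofReal q with hQdef
  have hP0 : P ≠ 0 := by simp [hPdef, ENNReal.ofReal_eq_zero]; linarith
  have hPtop : P ≠ ⊤ := ENNReal.ofReal_ne_top
  have hPr : P.toReal = p := ENNReal.toReal_ofReal hp0.le
  have hMem : ∀ k, k ≤ n → MemLp (X k) P μ := fun k hk =>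
    memLp_of_sub hpq hX hpos hint hk
  set M : ℕ → Ω → ℝ :=
    fun k ω => (range (k + 1)).sup' nonempty_range_add_one (fun i => X i ω) with hM
  have hMadapted : ∀ k, StronglyMeasurable[ℱ k] (M k) := by
    intro k
    induction k with
    | zero =>
        have hfe : M 0 = X 0 := funext fun ω => sup'_range_zero (fun i => X i ω)
        rw [hfe]
        exact hX.stronglyMeasurable 0
    | succ k ih =>
        have hfe : M (k + 1) = fun ω => max (X (k + 1) ω) (M k ω) :=
          funext fun ω => sup'_range_succ (fun i => X i ω) k
        rw [hfe]
        exact ((hX.stronglyMeasurable (k + 1)).measurable.max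
          ((ih.mono (ℱ.mono k.le_succ)).measurable)).stronglyMeasurable
  have hMnn : ∀ k, 0 ≤ᵐ[μ] M k := fun k =>
    (hpos 0).mono fun ω h =>
      le_trans h (Finset.le_sup' (fun i => X i ω) (Finset.mem_range.2 k.succ_pos))
  have hMmem : ∀ k, k ≤ n → MemLp (M k) P μ := by
    intro k hk
    have hsum : MemLp (fun ω => ∑ i ∈ range (k + 1), ‖X i ω‖) P μ := by
      refine memLp_finset_sum (range (k + 1)) fun i hi => ?_
      have hik := Finset.mem_range.1 hi
      exact (hMem i (by omega)).norm
    refine MemLp.of_le hsum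
      ((hMadapted k).mono (ℱ.le k)).aestronglyMeasurable (ae_of_all _ fun ω => ?_)
    have hnn : 0 ≤ ∑ i ∈ range (k + 1), ‖X i ω‖ :=
      Finset.sum_nonneg fun i _ => norm_nonneg _
    rw [Real.norm_eq_abs (M k ω), Real.norm_eq_abs, abs_of_nonneg hnn, abs_le]
    constructor
    · have h1 : X 0 ω ≤ M k ω :=
        Finset.le_sup' (fun i => X i ω) (Finset.mem_range.2 k.succ_pos)
      have h2 : -‖X 0 ω‖ ≤ X 0 ω := neg_abs_le _
      have h3 : ‖X 0 ω‖ ≤ ∑ i ∈ range (k + 1), ‖X i ω‖ :=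
        Finset.single_le_sum (f := fun j => ‖X j ω‖) (fun i _ => norm_nonneg _)
          (Finset.mem_range.2 k.succ_pos)
      linarith
    · refine Finset.sup'_le _ _ fun i hi => ?_
      have h4 : ‖X i ω‖ ≤ ∑ j ∈ range (k + 1), ‖X j ω‖ :=
        Finset.single_le_sum (f := fun j => ‖X j ω‖) (fun j _ => norm_nonneg _) hi
      calc X i ω ≤ |X i ω| := le_abs_self _
        _ = ‖X i ω‖ := (Real.norm_eq_abs _).symm
        _ ≤ _ := h4
  set G : ℕ → Ω → ℝ := fun k ω => M k ω ^ (p - 1) with hG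
  have hGSM : ∀ k, StronglyMeasurable[ℱ k] (G k) := fun k =>
    ((hMadapted k).measurable.pow_const (p - 1)).stronglyMeasurable
  have hGnn : ∀ k, 0 ≤ᵐ[μ] G k := fun k =>
    (hMnn k).mono fun ω h => Real.rpow_nonneg h _
  have hGmem : ∀ k, k ≤ n → MemLp (G k) Q μ := by
    intro k hk
    have h1 := (hMmem k hk).norm_rpow_div (ENNReal.ofReal (p - 1))
    rw [ENNReal.toReal_ofReal hp1'.le] at h1
    have hdiv : P / ENNReal.ofReal (p - 1) = Q := by
      rw [hPdef, hQdef, hq, ENNReal.ofReal_div_of_pos hp1']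
    rw [hdiv] at h1
    refine h1.ae_eq ?_
    filter_upwards [hMnn k] with ω h
    rw [Real.norm_eq_abs, abs_of_nonneg h]
  have h1QP : (1 : ℝ≥0∞) / 1 = 1 / Q + 1 / P := by
    have e1 : (1 : ℝ≥0∞) / Q = ENNReal.ofReal (1 / q) := by
      rw [one_div, one_div, ENNReal.ofReal_inv_of_pos hq0, hQdef]
    have e2 : (1 : ℝ≥0∞) / P = ENNReal.ofReal (1 / p) := by
      rw [one_div, one_div, ENNReal.ofReal_inv_of_pos hp0, hPdef]
    have h3 : 1 / q + 1 / p = 1 := by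
      have := hpq.inv_add_inv_eq_one
      simp only [one_div]
      linarith
    rw [e1, e2, ← ENNReal.ofReal_add (by positivity) (by positivity), h3]
    simp
  have hprod : ∀ k, k ≤ n → ∀ j, j ≤ n → Integrable (fun ω => G k ω * X j ω) μ := by
    intro k hk j hj
    haveI : ENNReal.HolderTriple Q P 1 := ⟨by simpa [one_div] using h1QP.symm⟩
    have hs := MemLp.smul (r := 1) (hMem j hj) (hGmem k hk)
    rw [memLp_one_iff_integrable] at hs
    exact hs
  have intMp : Integrable (fun ω => M n ω ^ p) μ := by
    have h2 := (hMmem n le_rfl).integrable_norm_rpow hP0 hPtop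
    rw [hPr] at h2
    refine h2.congr ?_
    filter_upwards [hMnn n] with ω h
    rw [Real.norm_eq_abs, abs_of_nonneg h]
  have intX0p : Integrable (fun ω => X 0 ω ^ p) μ := by
    have h2 := (hMem 0 (Nat.zero_le n)).integrable_norm_rpow hP0 hPtop
    rw [hPr] at h2
    refine h2.congr ?_
    filter_upwards [hpos 0] with ω h
    rw [Real.norm_eq_abs, abs_of_nonneg h]
  have intTerm : ∀ k, k < n → Integrable (fun ω => G k ω * (X k ω - X (k + 1) ω)) μ := by
    intro k hk
    have := (hprod k hk.le k hk.le).sub (hprod k hk.le (k + 1) hk)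
    refine this.congr (ae_of_all _ fun ω => ?_)
    simp only [Pi.sub_apply]
    ring
  have intS : Integrable (fun ω => ∑ k ∈ range n, G k ω * (X k ω - X (k + 1) ω)) μ :=
    integrable_finset_sum _ fun k hk => intTerm k (Finset.mem_range.1 hk)
  have hae : ∀ᵐ ω ∂μ, M n ω ^ p
      ≤ p * q * (∑ k ∈ range n, G k ω * (X k ω - X (k + 1) ω))
          + q ^ p * X n ω ^ p - q * X 0 ω ^ p := by
    have hall : ∀ᵐ ω ∂μ, ∀ k, 0 ≤ X k ω := ae_all_iff.2 hpos
    filter_upwards [hall] with ω hω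
    exact pathwise hpq (fun i => X i ω) hω n
  have intRHS : Integrable (fun ω =>
      p * q * (∑ k ∈ range n, G k ω * (X k ω - X (k + 1) ω))
        + q ^ p * X n ω ^ p - q * X 0 ω ^ p) μ :=
    ((intS.const_mul _).add (hint.const_mul _)).sub (intX0p.const_mul _)
  have main := integral_mono_ae intMp intRHS hae
  have intA1 : Integrable (fun ω => p * q * ∑ k ∈ range n, G k ω * (X k ω - X (k + 1) ω)) μ :=
    intS.const_mul _
  have intA2 : Integrable (fun ω => q ^ p * X n ω ^ p) μ := hint.const_mul _
  have intA : Integrable (fun ω =>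
      p * q * (∑ k ∈ range n, G k ω * (X k ω - X (k + 1) ω)) + q ^ p * X n ω ^ p) μ :=
    intA1.add intA2
  have intB : Integrable (fun ω => q * X 0 ω ^ p) μ := intX0p.const_mul _
  rw [integral_sub intA intB, integral_add intA1 intA2,
    integral_const_mul, integral_const_mul, integral_const_mul] at main
  have hSle : ∫ ω, (∑ k ∈ range n, G k ω * (X k ω - X (k + 1) ω)) ∂μ ≤ 0 := by
    rw [integral_finset_sum _ fun k hk => intTerm k (Finset.mem_range.1 hk)]
    refine Finset.sum_nonpos fun k hk => ?_
    have hk' : k < n := Finset.mem_range.1 hk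
    have e : ∫ ω, G k ω * (X k ω - X (k + 1) ω) ∂μ
        = ∫ ω, G k ω * X k ω ∂μ - ∫ ω, G k ω * X (k + 1) ω ∂μ := by
      rw [← integral_sub (hprod k hk'.le k hk'.le) (hprod k hk'.le (k + 1) hk')]
      exact integral_congr_ae (ae_of_all _ fun ω => by ring)
    rw [e]
    have := sub_step hX (Nat.le_succ k) (hGSM k) (hGnn k)
      (hprod k hk'.le k hk'.le) (hprod k hk'.le (k + 1) hk')
    linarith
  have hfin : p * q * ∫ ω, (∑ k ∈ range n, G k ω * (X k ω - X (k + 1) ω)) ∂μ ≤ 0 :=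
    mul_nonpos_of_nonneg_of_nonpos (by positivity) hSle
  have hgoal : (∫ ω, ((Finset.range (n + 1)).sup' Finset.nonempty_range_add_one
      (fun k => X k ω)) ^ p ∂μ) = ∫ ω, M n ω ^ p ∂μ := rfl
  rw [hgoal]
  linarith [main, hfin]
end

section
/- For positive reals x_0, ..., x_n with x_0 > 0, the pathwise L log L inequality holds: x̄_n ≤ (e/(e−1))·[x_0 + x_n·log(x_n/x_0) − Σ_{k=1}^n log(x̄_{k-1}/x_0)·(x_k − x_{k-1})], where x̄_k = max{x_0, ..., x_k} (with the convention x_n log(x_n/x_0) = 0 if x_n = 0). -/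
open Finset

private lemma abel9 (n : ℕ) (f g : ℕ → ℝ) :
    ∑ k ∈ Finset.Icc 1 n, g (k - 1) * (f k - f (k - 1)) =
      g n * f n - g 0 * f 0 - ∑ k ∈ Finset.Icc 1 n, f k * (g k - g (k - 1)) := by
  induction n with
  | zero => simp
  | succ n ih =>
      rw [Finset.sum_Icc_succ_top (by omega), Finset.sum_Icc_succ_top (by omega), ih]
      simp only [Nat.add_sub_cancel]
      ring

private lemma tele9 (n : ℕ) (g : ℕ → ℝ) :
    ∑ k ∈ Finset.Icc 1 n, (g k - g (k - 1)) = g n - g 0 := by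
  induction n with
  | zero => simp
  | succ n ih =>
      rw [Finset.sum_Icc_succ_top (by omega), ih]
      simp only [Nat.add_sub_cancel]
      ring

private lemma log_le_div_e {u : ℝ} (hu : 0 < u) : Real.log u ≤ u / Real.exp 1 := by
  have h1 : Real.log (u / Real.exp 1) ≤ u / Real.exp 1 - 1 :=
    Real.log_le_sub_one_of_pos (by positivity)
  have h2 : Real.log (u / Real.exp 1) = Real.log u - 1 := by
    rw [Real.log_div (ne_of_gt hu) (by positivity), Real.log_exp]
  linarith

theorem stmt9 (n : ℕ) (x : ℕ → ℝ) (h0 : 0 < x 0) (hx : ∀ k, 0 ≤ x k) (xb : ℕ → ℝ)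
    (hxb : ∀ k, xb k = (Finset.range (k + 1)).sup' Finset.nonempty_range_add_one x) :
    xb n ≤ Real.exp 1 / (Real.exp 1 - 1) *
      (x 0 + x n * Real.log (x n / x 0)
        - ∑ k ∈ Finset.Icc 1 n, Real.log (xb (k - 1) / x 0) * (x k - x (k - 1))) := by
  set e := Real.exp 1 with he
  have he1 : 1 < e := by
    have := Real.exp_one_gt_d9; rw [he]; linarith
  have hxb0 : xb 0 = x 0 := by
    rw [hxb 0]; simp
  have hx0le : ∀ k, x 0 ≤ xb k := by
    intro k; rw [hxb k]
    exact Finset.le_sup' x (Finset.mem_range.2 (Nat.succ_pos k))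
  have hxble : ∀ k, x k ≤ xb k := by
    intro k; rw [hxb k]
    exact Finset.le_sup' x (Finset.mem_range.2 (Nat.lt_succ_self k))
  have hxbpos : ∀ k, 0 < xb k := fun k => lt_of_lt_of_le h0 (hx0le k)
  have hmax : ∀ k, xb (k + 1) = max (xb k) (x (k + 1)) := by
    intro k
    apply le_antisymm
    · rw [hxb (k + 1)]
      apply Finset.sup'_le
      intro i hi
      have hi' : i ≤ k + 1 := Nat.lt_succ_iff.1 (Finset.mem_range.1 hi)
      rcases eq_or_lt_of_le hi' with rfl | hlt
      · exact le_max_right _ _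
      · refine le_trans ?_ (le_max_left _ _)
        rw [hxb k]
        exact Finset.le_sup' x (Finset.mem_range.2 hlt)
    · apply max_le
      · rw [hxb k, hxb (k + 1)]
        apply Finset.sup'_le
        intro i hi
        exact Finset.le_sup' x (Finset.mem_range.2
          (lt_trans (Finset.mem_range.1 hi) (Nat.lt_succ_self _)))
      · exact hxble (k + 1)
  set h : ℕ → ℝ := fun k => Real.log (xb k / x 0) with hh
  have hh0 : h 0 = 0 := by simp [hh, hxb0, div_self (ne_of_gt h0)]
  -- termwise bound
  have hstep : ∀ k, xb (k + 1) - xb k ≤ x (k + 1) * (h (k + 1) - h k) := by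
    intro k
    rcases le_or_gt (x (k + 1)) (xb k) with hle | hlt
    · have heq : xb (k + 1) = xb k := by rw [hmax k]; exact max_eq_left hle
      have hheq : h (k + 1) = h k := by simp only [hh, heq]
      rw [heq, hheq]; simp
    · have hb : xb (k + 1) = x (k + 1) := by rw [hmax k]; exact max_eq_right hlt.le
      have hbpos := hxbpos (k + 1)
      have hapos := hxbpos k
      have hlog : h (k + 1) - h k = Real.log (xb (k + 1) / xb k) := by
        show Real.log (xb (k + 1) / x 0) - Real.log (xb k / x 0) = _
        rw [Real.log_div (ne_of_gt hbpos) (ne_of_gt h0),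
            Real.log_div (ne_of_gt hapos) (ne_of_gt h0),
            Real.log_div (ne_of_gt hbpos) (ne_of_gt hapos)]
        ring
      have key : 1 - xb k / xb (k + 1) ≤ Real.log (xb (k + 1) / xb k) := by
        have h1 : Real.log (xb k / xb (k + 1)) ≤ xb k / xb (k + 1) - 1 :=
          Real.log_le_sub_one_of_pos (by positivity)
        have h2 : Real.log (xb k / xb (k + 1)) = - Real.log (xb (k + 1) / xb k) := by
          rw [← Real.log_inv]; congr 1; field_simp
        linarith
      have : xb (k + 1) * (1 - xb k / xb (k + 1)) ≤ xb (k + 1) * Real.log (xb (k + 1) / xb k) :=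
        mul_le_mul_of_nonneg_left key hbpos.le
      have hexp : xb (k + 1) * (1 - xb k / xb (k + 1)) = xb (k + 1) - xb k := by
        field_simp
      rw [hlog, ← hb]
      linarith
  -- sum bound
  have hsum : xb n - x 0 ≤ ∑ k ∈ Finset.Icc 1 n, x k * (h k - h (k - 1)) := by
    have := tele9 n xb
    rw [← hxb0]
    rw [← this]
    apply Finset.sum_le_sum
    intro k hk
    have hk1 : 1 ≤ k := (Finset.mem_Icc.1 hk).1
    obtain ⟨m, rfl⟩ : ∃ m, k = m + 1 := ⟨k - 1, by omega⟩
    simpa using hstep m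
  -- final term bound
  have hfinal : - (xb n / e) ≤ x n * Real.log (x n / x 0) - h n * x n := by
    rcases eq_or_lt_of_le (hx n) with hz | hpos
    · rw [← hz]
      simp only [zero_mul, mul_zero, sub_zero]
      have hd : 0 < xb n / e := div_pos (hxbpos n) (by linarith)
      linarith
    · have hbn := hxbpos n
      have hlog : Real.log (x n / x 0) - h n = - Real.log (xb n / x n) := by
        show _ - Real.log (xb n / x 0) = _
        rw [Real.log_div (ne_of_gt hpos) (ne_of_gt h0),
            Real.log_div (ne_of_gt hbn) (ne_of_gt h0),
            Real.log_div (ne_of_gt hbn) (ne_of_gt hpos)]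
        ring
      have key : Real.log (xb n / x n) ≤ (xb n / x n) / e := log_le_div_e (by positivity)
      have : x n * Real.log (xb n / x n) ≤ x n * ((xb n / x n) / e) :=
        mul_le_mul_of_nonneg_left key hpos.le
      have hexp : x n * ((xb n / x n) / e) = xb n / e := by
        field_simp
      have h3 : x n * Real.log (xb n / x n) ≤ xb n / e := by
        rw [← hexp]; exact this
      have h4 : x n * Real.log (x n / x 0) - h n * x n
          = - (x n * Real.log (xb n / x n)) := by
        rw [mul_comm (h n) (x n), ← mul_sub, hlog]; ring
      rw [h4]
      linarith
  -- Abel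
  have habel := abel9 n x h
  have hsumeq : ∑ k ∈ Finset.Icc 1 n, Real.log (xb (k - 1) / x 0) * (x k - x (k - 1))
      = h n * x n - ∑ k ∈ Finset.Icc 1 n, x k * (h k - h (k - 1)) := by
    rw [show (fun k => Real.log (xb (k - 1) / x 0) * (x k - x (k - 1)))
        = fun k => h (k - 1) * (x k - x (k - 1)) from rfl] at *
    rw [habel, hh0]; ring
  set B := x 0 + x n * Real.log (x n / x 0)
      - ∑ k ∈ Finset.Icc 1 n, Real.log (xb (k - 1) / x 0) * (x k - x (k - 1)) with hB
  have hBge : xb n * (1 - 1 / e) ≤ B := by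
    rw [hB, hsumeq]
    have hepos : (0:ℝ) < e := by linarith
    have hxx : xb n * (1 - 1 / e) = xb n - xb n / e := by
      field_simp
    rw [hxx]
    linarith
  have hepos : (0:ℝ) < e := by linarith
  have hne : e ≠ 0 := ne_of_gt hepos
  have hne2 : e - 1 ≠ 0 := by intro hc; rw [sub_eq_zero] at hc; exact absurd hc.symm (ne_of_lt he1)
  have hcoef : 0 < e / (e - 1) := div_pos hepos (by linarith)
  have : e / (e - 1) * (xb n * (1 - 1 / e)) = xb n := by
    field_simp
  calc xb n = e / (e - 1) * (xb n * (1 - 1 / e)) := this.symm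
    _ ≤ e / (e - 1) * B := mul_le_mul_of_nonneg_left hBge hcoef.le
end

section
/- For positive reals x_0, ..., x_n with x_0 > 0: x̄_n ≤ (e/(e−1))·[x_0(1 − log x_0) + x_n log x_n − Σ_{k=1}^n (log x̄_{k-1})·(x_k − x_{k-1})], where x̄_k = max{x_0, ..., x_k} and x_n log x_n is interpreted as 0 if x_n = 0. -/
open Finset

theorem stmt10 (n : ℕ) (x : ℕ → ℝ) (h0 : 0 < x 0) (hx : ∀ k, 0 ≤ x k) (xb : ℕ → ℝ)
    (hxb : ∀ k, xb k = (Finset.range (k + 1)).sup' Finset.nonempty_range_add_one x) :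
    xb n ≤ Real.exp 1 / (Real.exp 1 - 1) *
      (x 0 * (1 - Real.log (x 0)) + x n * Real.log (x n)
        - ∑ k ∈ Finset.Icc 1 n, Real.log (xb (k - 1)) * (x k - x (k - 1))) := by
  have hxb0 : xb 0 = x 0 := by simp [hxb]
  have hxbs : ∀ k, xb (k + 1) = max (x (k + 1)) (xb k) := by
    intro k
    simp only [hxb]
    simp [Finset.range_add_one]
  have hxbpos : ∀ k, 0 < xb k := by
    intro k
    induction k with
    | zero => rw [hxb0]; exact h0
    | succ m ih => rw [hxbs]; exact lt_max_of_lt_right ih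
  have hxble : ∀ k, x k ≤ xb k := by
    intro k
    cases k with
    | zero => rw [hxb0]
    | succ m => rw [hxbs]; exact le_max_left _ _
  -- key induction
  have key : ∀ m, xb m - x m * Real.log (xb m) ≤
      x 0 * (1 - Real.log (x 0)) -
      ∑ k ∈ Finset.Icc 1 m, Real.log (xb (k - 1)) * (x k - x (k - 1)) := by
    intro m
    induction m with
    | zero => simp [hxb0]; nlinarith [le_refl (x 0)]
    | succ m ih =>
      rw [Finset.sum_Icc_succ_top (Nat.le_add_left 1 m)]
      simp only [Nat.add_sub_cancel]
      have hstep : xb (m + 1) - x (m + 1) * Real.log (xb (m + 1)) ≤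
          xb m - x m * Real.log (xb m) - Real.log (xb m) * (x (m + 1) - x m) := by
        rcases le_or_gt (x (m + 1)) (xb m) with h | h
        · rw [hxbs, max_eq_right h]; nlinarith [le_refl (x m)]
        · rw [hxbs, max_eq_left h.le]
          have hb := hxbpos m
          have ha : 0 < x (m + 1) := hb.trans h
          have hlog := Real.log_le_sub_one_of_pos (div_pos hb ha)
          rw [Real.log_div hb.ne' ha.ne'] at hlog
          have := mul_le_mul_of_nonneg_left hlog ha.le
          rw [mul_sub, mul_sub, mul_div_cancel₀ _ ha.ne', mul_one] at this
          nlinarith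
      linarith
  have hkey := key n
  have hM := hxbpos n
  have hbound : - (xb n * Real.exp (-1)) ≤ x n * Real.log (x n) - x n * Real.log (xb n) := by
    rcases eq_or_lt_of_le (hx n) with h | h
    · rw [← h]; simp; positivity
    · have hle := hxble n
      have h1 : Real.log (xb n / x n) ≤ xb n / x n * Real.exp (-1) := by
        have hs : 0 < xb n / x n * Real.exp (-1) := by positivity
        have := Real.log_le_sub_one_of_pos hs
        rw [Real.log_mul (by positivity) (Real.exp_ne_zero _), Real.log_exp] at this
        linarith
      have h2 := mul_le_mul_of_nonneg_left h1 h.le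
      rw [Real.log_div hM.ne' h.ne'] at h2
      have h3 : x n * (xb n / x n * Real.exp (-1)) = xb n * Real.exp (-1) := by
        field_simp
      rw [h3, mul_sub] at h2
      linarith
  have hinner : (1 - Real.exp (-1)) * xb n ≤
      x 0 * (1 - Real.log (x 0)) + x n * Real.log (x n)
        - ∑ k ∈ Finset.Icc 1 n, Real.log (xb (k - 1)) * (x k - x (k - 1)) := by
    nlinarith [hkey, hbound]
  have he1 : (1:ℝ) < Real.exp 1 := by
    have := Real.add_one_le_exp (1:ℝ); linarith
  have heinv : Real.exp (-1) = (Real.exp 1)⁻¹ := Real.exp_neg 1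
  rw [heinv] at hinner
  have hepos : (0:ℝ) < Real.exp 1 - 1 := by linarith
  rw [div_mul_eq_mul_div, le_div_iff₀ hepos]
  calc xb n * (Real.exp 1 - 1) = Real.exp 1 * ((1 - (Real.exp 1)⁻¹) * xb n) := by
        field_simp
    _ ≤ _ := mul_le_mul_of_nonneg_left hinner (Real.exp_pos 1).le
end

section
/- If X = (X_k)_{k=0,...,n} is a nonnegative submartingale with E[X_n log X_n] < ∞ (convention 0 log 0 = 0), then E[X̄_n] ≤ (e/(e−1))·(1 + E[X_n log X_n]), where X̄_n = max{X_0, ..., X_n}. -/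
open MeasureTheory Finset
open scoped ENNReal

lemma alogb (a b : ℝ) (ha : 0 ≤ a) (hb : 1 ≤ b) :
    a * Real.log b ≤ a * Real.log a + b / Real.exp 1 := by
  rcases eq_or_lt_of_le ha with h | h
  · simp [← h]
    positivity
  · have hb0 : 0 < b := lt_of_lt_of_le one_pos hb
    have hba : 0 < b / a := div_pos hb0 h
    have hlog : Real.log (b / a) ≤ b / a / Real.exp 1 := by
      have := Real.log_le_sub_one_of_pos (x := b / a / Real.exp 1) (by positivity)
      rw [Real.log_div (ne_of_gt hba) (Real.exp_ne_zero 1), Real.log_exp] at this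
      linarith
    have : a * Real.log (b / a) ≤ b / Real.exp 1 := by
      calc a * Real.log (b / a) ≤ a * (b / a / Real.exp 1) :=
            mul_le_mul_of_nonneg_left hlog ha
        _ = b / Real.exp 1 := by field_simp
    rw [Real.log_div (ne_of_gt hb0) (ne_of_gt h)] at this
    nlinarith

lemma lint_inv (b : ℝ) (hb : 1 ≤ b) :
    ∫⁻ t in Set.Ioc (1:ℝ) b, (ENNReal.ofReal t)⁻¹ = ENNReal.ofReal (Real.log b) := by
  have hne : ∀ x : ℝ, x ∈ Set.uIcc (1:ℝ) b → x ≠ 0 := by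
    intro x hx h
    subst h
    rw [Set.mem_uIcc] at hx
    rcases hx with ⟨h1,_⟩|⟨_,h2⟩ <;> linarith
  have h1 : ∀ t ∈ Set.Ioc (1:ℝ) b, (ENNReal.ofReal t)⁻¹ = ENNReal.ofReal (1 / t) := by
    intro t ht
    rw [ENNReal.ofReal_div_of_pos (lt_trans one_pos ht.1), ENNReal.ofReal_one, one_div]
  rw [setLIntegral_congr_fun measurableSet_Ioc h1]
  have hInt : IntegrableOn (fun t => 1 / t) (Set.Ioc (1:ℝ) b) := by
    rw [← intervalIntegrable_iff_integrableOn_Ioc_of_le hb]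
    exact intervalIntegral.intervalIntegrable_one_div hne (by fun_prop)
  rw [← ofReal_integral_eq_lintegral_ofReal hInt]
  · congr 1
    rw [← intervalIntegral.integral_of_le hb, integral_one_div
      (fun h => hne 0 h rfl), div_one]
  · filter_upwards [ae_restrict_mem measurableSet_Ioc] with t ht
    have : (0:ℝ) < t := lt_trans one_pos ht.1
    positivity

theorem aux14 {Ω : Type*} {m0 : MeasurableSpace Ω} {μ : Measure Ω} [IsProbabilityMeasure μ]
    (ℱ : Filtration ℕ m0) (X : ℕ → Ω → ℝ) (n : ℕ)
    (hX : Submartingale X ℱ μ) (hpos : 0 ≤ X)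
    (hint : Integrable (fun ω => X n ω * Real.log (X n ω)) μ) :
    (∫ ω, (Finset.range (n + 1)).sup' Finset.nonempty_range_add_one (fun k => X k ω) ∂μ)
      ≤ Real.exp 1 / (Real.exp 1 - 1) *
        (1 + ∫ ω, X n ω * Real.log (X n ω) ∂μ) := by
  set M : Ω → ℝ := fun ω => (Finset.range (n + 1)).sup' Finset.nonempty_range_add_one
    (fun k => X k ω) with hM
  set N : Ω → ℝ := fun ω => max (M ω) 1 with hNdef
  have hXmeas : ∀ k, Measurable (X k) :=
    fun k => (hX.stronglyMeasurable k).measurable.mono (ℱ.le k) le_rfl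
  have hMmeas : Measurable M := Finset.measurable_range_sup'' (fun k _ => hXmeas k)
  have hNmeas : Measurable N := hMmeas.max measurable_const
  have hMX : ∀ ω, X n ω ≤ M ω := fun ω =>
    Finset.le_sup' (fun k => X k ω) (Finset.self_mem_range_succ n)
  have hMnonneg : ∀ ω, 0 ≤ M ω := fun ω => le_trans (hpos n ω) (hMX ω)
  have hN1 : ∀ ω, 1 ≤ N ω := fun ω => le_max_right _ _
  have hMN : ∀ ω, M ω ≤ N ω := fun ω => le_max_left _ _
  -- integrability of M and N
  have hMint : Integrable M μ := by
    refine Integrable.mono' (f := M)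
      (integrable_finset_sum (range (n+1)) (fun k _ => hX.integrable k))
      hMmeas.aestronglyMeasurable ?_
    filter_upwards with ω
    rw [Real.norm_eq_abs, abs_of_nonneg (hMnonneg ω)]
    refine Finset.sup'_le _ _ (fun k hk => ?_)
    calc X k ω ≤ ∑ j ∈ range (n+1), X j ω :=
          Finset.single_le_sum (fun j _ => hpos j ω) hk
      _ = _ := rfl
  have hNint : Integrable N μ := hMint.sup (integrable_const 1)
  -- functions g and h
  set g : Ω → ℝ := fun ω => N ω - 1 with hgdef
  set h : Ω → ℝ := fun ω => X n ω * Real.log (N ω) with hhdef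
  have hgnn : ∀ ω, 0 ≤ g ω := fun ω => by simp [hgdef]; exact hN1 ω
  have hhnn : ∀ ω, 0 ≤ h ω := fun ω =>
    mul_nonneg (hpos n ω) (Real.log_nonneg (hN1 ω))
  have hgint : Integrable g μ := hMint.sup (integrable_const 1) |>.sub (integrable_const 1)
  have hbound : ∀ ω, h ω ≤ X n ω * Real.log (X n ω) + N ω / Real.exp 1 :=
    fun ω => alogb (X n ω) (N ω) (hpos n ω) (hN1 ω)
  have hboundint : Integrable (fun ω => X n ω * Real.log (X n ω) + N ω / Real.exp 1) μ :=
    hint.add (hNint.div_const _)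
  have hhmeas : Measurable h := (hXmeas n).mul (hNmeas.log)
  have hhint : Integrable h μ := by
    refine Integrable.mono' hboundint hhmeas.aestronglyMeasurable ?_
    filter_upwards with ω
    rw [Real.norm_eq_abs, abs_of_nonneg (hhnn ω)]
    exact hbound ω
  -- key lintegral inequality
  have key : ∫⁻ ω, ENNReal.ofReal (g ω) ∂μ ≤ ∫⁻ ω, ENNReal.ofReal (h ω) ∂μ := by
    classical
    set S : Set (Ω × ℝ) := {p | 1 < p.2 ∧ p.2 ≤ M p.1} with hS
    have hSmeas : MeasurableSet S :=
      (measurableSet_lt measurable_const measurable_snd).inter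
        (measurableSet_le measurable_snd (hMmeas.comp measurable_fst))
    set F : Ω × ℝ → ℝ≥0∞ :=
      S.indicator (fun p => ENNReal.ofReal (X n p.1) * (ENNReal.ofReal p.2)⁻¹) with hF
    set G : Ω × ℝ → ℝ≥0∞ := S.indicator (fun _ => 1) with hG
    have hFmeas : Measurable F := by
      refine Measurable.indicator ?_ hSmeas
      exact ((ENNReal.measurable_ofReal.comp ((hXmeas n).comp measurable_fst)).mul
        ((ENNReal.measurable_ofReal.comp measurable_snd).inv))
    have hGmeas : Measurable G := measurable_const.indicator hSmeas
    have hA : ∫⁻ ω, ENNReal.ofReal (g ω) ∂μ = ∫⁻ ω, ∫⁻ t, G (ω, t) ∂volume ∂μ := by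
      refine lintegral_congr (fun ω => ?_)
      have h1 : ∀ t : ℝ, G (ω, t) = (Set.Ioc (1:ℝ) (M ω)).indicator (fun _ => 1) t := by
        intro t
        simp [hG, hS, Set.indicator_apply, Set.mem_Ioc]
      simp only [h1]
      rw [lintegral_indicator measurableSet_Ioc, setLIntegral_one, Real.volume_Ioc]
      rcases le_total 1 (M ω) with hc | hc
      · congr 1
        show N ω - 1 = M ω - 1
        rw [show N ω = M ω from max_eq_left hc]
      · have h2 : ENNReal.ofReal (g ω) = 0 := by
          rw [ENNReal.ofReal_eq_zero]
          show N ω - 1 ≤ 0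
          rw [show N ω = 1 from max_eq_right hc]
          norm_num
        rw [h2, eq_comm, ENNReal.ofReal_eq_zero]
        linarith
    have hB : ∫⁻ ω, ENNReal.ofReal (h ω) ∂μ = ∫⁻ ω, ∫⁻ t, F (ω, t) ∂volume ∂μ := by
      refine lintegral_congr (fun ω => ?_)
      have h1 : ∀ t : ℝ, F (ω, t) = (Set.Ioc (1:ℝ) (M ω)).indicator
          (fun t => ENNReal.ofReal (X n ω) * (ENNReal.ofReal t)⁻¹) t := by
        intro t
        simp [hF, hS, Set.indicator_apply, Set.mem_Ioc]
      simp only [h1]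
      rw [lintegral_indicator measurableSet_Ioc]
      have hIocN : Set.Ioc (1:ℝ) (M ω) = Set.Ioc (1:ℝ) (N ω) := by
        ext t
        simp only [Set.mem_Ioc, hNdef, le_max_iff]
        constructor
        · rintro ⟨h1t, h2t⟩; exact ⟨h1t, Or.inl h2t⟩
        · rintro ⟨h1t, h2t | h2t⟩
          · exact ⟨h1t, h2t⟩
          · linarith
      rw [hIocN, lintegral_const_mul (ENNReal.ofReal (X n ω))
        (f := fun t => (ENNReal.ofReal t)⁻¹) ENNReal.measurable_ofReal.inv,
        lint_inv (N ω) (hN1 ω), hhdef, ENNReal.ofReal_mul (hpos n ω)]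
    rw [hA, hB,
      lintegral_lintegral_swap (f := fun ω t => G (ω, t))
        (show AEMeasurable (Function.uncurry fun ω t => G (ω, t)) (μ.prod volume) from
          hGmeas.aemeasurable),
      lintegral_lintegral_swap (f := fun ω t => F (ω, t))
        (show AEMeasurable (Function.uncurry fun ω t => F (ω, t)) (μ.prod volume) from
          hFmeas.aemeasurable)]
    refine lintegral_mono (fun t => ?_)
    rcases le_or_gt t 1 with ht | ht
    · have hz : ∀ ω, G (ω, t) = 0 := by
        intro ω
        simp [hG, hS, Set.indicator_apply]
        intro h1t
        linarith
      simp [hz]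
    · have ht0 : (0:ℝ) < t := lt_trans one_pos ht
      have hsetm : MeasurableSet {ω | t ≤ M ω} := measurableSet_le measurable_const hMmeas
      have hGt : ∀ ω, G (ω, t) = ({ω' | t ≤ M ω'}).indicator (fun _ => (1:ℝ≥0∞)) ω := by
        intro ω
        simp [hG, hS, Set.indicator_apply, ht]
      have hFt : ∀ ω, F (ω, t) = ({ω' | t ≤ M ω'}).indicator
          (fun ω' => ENNReal.ofReal (X n ω') * (ENNReal.ofReal t)⁻¹) ω := by
        intro ω
        simp [hF, hS, Set.indicator_apply, ht]
      simp only [hGt, hFt]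
      rw [lintegral_indicator hsetm, setLIntegral_one, lintegral_indicator hsetm,
        lintegral_mul_const (f := fun a => ENNReal.ofReal (X n a)) _
          (ENNReal.measurable_ofReal.comp (hXmeas n))]
      -- use Doob's maximal inequality
      have hmax := maximal_ineq hX hpos (ε := t.toNNReal) n
      have hco : (t.toNNReal : ℝ) = t := Real.coe_toNNReal t ht0.le
      rw [hco] at hmax
      have hsetint : IntegrableOn (X n) {ω | t ≤ M ω} μ := (hX.integrable n).integrableOn
      rw [ofReal_integral_eq_lintegral_ofReal hsetint
        (Filter.Eventually.of_forall (fun ω => hpos n ω))] at hmax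
      have hcoe : (t.toNNReal : ℝ≥0∞) = ENNReal.ofReal t := rfl
      rw [hcoe] at hmax
      have htne : ENNReal.ofReal t ≠ 0 := by
        simp [ENNReal.ofReal_eq_zero]
        linarith
      calc μ {ω | t ≤ M ω}
          = (ENNReal.ofReal t * μ {ω | t ≤ M ω}) * (ENNReal.ofReal t)⁻¹ := by
            rw [mul_comm (ENNReal.ofReal t), mul_assoc,
              ENNReal.mul_inv_cancel htne ENNReal.ofReal_ne_top, mul_one]
        _ ≤ (∫⁻ ω in {ω | t ≤ M ω}, ENNReal.ofReal (X n ω) ∂μ) * (ENNReal.ofReal t)⁻¹ :=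
            mul_le_mul_left hmax _
  -- transfer to real integrals
  have hgh : ∫ ω, g ω ∂μ ≤ ∫ ω, h ω ∂μ := by
    rw [← ENNReal.ofReal_le_ofReal_iff (integral_nonneg hhnn),
      ofReal_integral_eq_lintegral_ofReal hgint (Filter.Eventually.of_forall hgnn),
      ofReal_integral_eq_lintegral_ofReal hhint (Filter.Eventually.of_forall hhnn)]
    exact key
  have hhb : ∫ ω, h ω ∂μ ≤ (∫ ω, X n ω * Real.log (X n ω) ∂μ) + (∫ ω, N ω ∂μ) / Real.exp 1 := by
    calc ∫ ω, h ω ∂μ ≤ ∫ ω, (X n ω * Real.log (X n ω) + N ω / Real.exp 1) ∂μ :=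
          integral_mono hhint hboundint hbound
      _ = _ := by rw [integral_add hint (hNint.div_const _), integral_div]
  have hNg : ∫ ω, N ω ∂μ = (∫ ω, g ω ∂μ) + 1 := by
    have : ∫ ω, N ω ∂μ = ∫ ω, (g ω + 1) ∂μ := by
      congr 1; funext ω; simp [hgdef]
    rw [this, integral_add hgint (integrable_const 1), integral_const]
    simp
  have hMleN : ∫ ω, M ω ∂μ ≤ ∫ ω, N ω ∂μ := integral_mono hMint hNint hMN
  set EN := ∫ ω, N ω ∂μ
  set I := ∫ ω, X n ω * Real.log (X n ω) ∂μ
  have hEN : EN ≤ 1 + I + EN / Real.exp 1 := by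
    linarith [hgh.trans hhb, hNg]
  have he : (1:ℝ) < Real.exp 1 := by
    have := Real.add_one_le_exp 1
    nlinarith [Real.exp_pos 1]
  have hfin : EN ≤ Real.exp 1 / (Real.exp 1 - 1) * (1 + I) := by
    have he0 : 0 < Real.exp 1 := Real.exp_pos 1
    rw [div_mul_eq_mul_div, le_div_iff₀ (by linarith)]
    have h3 : EN * Real.exp 1 ≤ (1 + I + EN / Real.exp 1) * Real.exp 1 :=
      mul_le_mul_of_nonneg_right hEN he0.le
    rw [add_mul, div_mul_cancel₀ _ (ne_of_gt he0)] at h3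
    nlinarith
  exact le_trans hMleN hfin

theorem stmt14 {Ω : Type*} {m0 : MeasurableSpace Ω} {μ : Measure Ω} [IsProbabilityMeasure μ]
    (ℱ : Filtration ℕ m0) (X : ℕ → Ω → ℝ) (n : ℕ)
    (hX : Submartingale X ℱ μ) (hpos : ∀ k, 0 ≤ᵐ[μ] X k)
    (hint : Integrable (fun ω => X n ω * Real.log (X n ω)) μ) :
    (∫ ω, (Finset.range (n + 1)).sup' Finset.nonempty_range_add_one (fun k => X k ω) ∂μ)
      ≤ Real.exp 1 / (Real.exp 1 - 1) *
        (1 + ∫ ω, X n ω * Real.log (X n ω) ∂μ) := by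
  set Y : ℕ → Ω → ℝ := fun k ω => max (X k ω) 0 with hY
  have hsub : Submartingale Y ℱ μ := hX.pos
  have hYpos : 0 ≤ Y := fun k ω => le_max_right _ _
  have happ : ∀ k ω, Y k ω = max (X k ω) 0 := fun k ω => rfl
  have hae : ∀ k, X k =ᵐ[μ] Y k := by
    intro k
    filter_upwards [hpos k] with ω hω
    exact (max_eq_left hω).symm
  have hint' : Integrable (fun ω => Y n ω * Real.log (Y n ω)) μ := by
    refine hint.congr ?_
    filter_upwards [hae n] with ω hω
    rw [hω]
  have hmain := aux14 ℱ Y n hsub hYpos hint'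
  have h1 : (∫ ω, (Finset.range (n + 1)).sup' Finset.nonempty_range_add_one (fun k => X k ω) ∂μ)
      = ∫ ω, (Finset.range (n + 1)).sup' Finset.nonempty_range_add_one (fun k => Y k ω) ∂μ := by
    refine integral_congr_ae ?_
    filter_upwards [ae_all_iff.mpr hae] with ω hω
    exact Finset.sup'_congr _ rfl (fun k _ => hω k)
  have h2 : (∫ ω, X n ω * Real.log (X n ω) ∂μ)
      = ∫ ω, Y n ω * Real.log (Y n ω) ∂μ := by
    refine integral_congr_ae ?_
    filter_upwards [hae n] with ω hω
    rw [hω]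
  rw [h1, h2]
  exact hmain
end
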